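/- arXiv:1505.07009 — 5 statements merged into one kernel-verified Lean document; each statement's English description precedes it below -/
import Mathlib

section
/- Let k ≥ 1 be an integer, let s ∈ ℂ be such that 2s is not a nonpositive integer, and let r ∈ ℂ with |r| < 1. Then 2k(r+2k)·₂F₁(s+k, s+k; 2s; r) + 4k(s−k)·₂F₁(s+k, s+k−1; 2s; r) + (s−k)²·₂F₁(s+k−1, s+k−1; 2s; r) = (s+k)²(1−r)²·₂F₁(s+k+1, s+k+1; 2s; r). -/
open Complex

/-- The Gauss hypergeometric series `₂F₁(a,b;c;x) = ∑ₙ (a)ₙ(b)ₙ/((c)ₙ n!) xⁿ`. -/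
noncomputable def hyp2F1 (a b c x : ℂ) : ℂ :=
  ∑' n : ℕ, (ascPochhammer ℂ n).eval a * (ascPochhammer ℂ n).eval b /
    ((ascPochhammer ℂ n).eval c * (n.factorial : ℂ)) * x ^ n

open Filter Polynomial

/-- The `n`-th coefficient of the hypergeometric series. -/
noncomputable def coefAux (A B c : ℂ) (n : ℕ) : ℂ :=
  (ascPochhammer ℂ n).eval A * (ascPochhammer ℂ n).eval B /
    ((ascPochhammer ℂ n).eval c * (n.factorial : ℂ))

lemma tendsto_inv_add_aux (y : ℂ) : Tendsto (fun n : ℕ => (y + (n : ℂ))⁻¹) atTop (nhds 0) := by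
  rw [tendsto_zero_iff_norm_tendsto_zero]
  have h : Tendsto (fun n : ℕ => ‖y + (n : ℂ)‖) atTop atTop := by
    apply tendsto_atTop_mono (fun n => ?_)
      (tendsto_atTop_add_const_left _ (-‖y‖) tendsto_natCast_atTop_atTop)
    have h1 : ‖((n : ℂ))‖ ≤ ‖y + (n : ℂ)‖ + ‖y‖ := by
      simpa using norm_add_le (y + (n : ℂ)) (-y)
    have hn : ‖((n : ℂ))‖ = (n : ℝ) := by simp
    linarith
  simpa [norm_inv, Pi.inv_def] using h.inv_tendsto_atTop

lemma poch_ne_zero_aux {c : ℂ} (hc : ∀ n : ℕ, c + n ≠ 0) (n : ℕ) :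
    (ascPochhammer ℂ n).eval c ≠ 0 := by
  induction n with
  | zero => simp
  | succ m ih =>
      rw [ascPochhammer_succ_eval]
      exact mul_ne_zero ih (hc m)

lemma summable_coefAux (A B c : ℂ) (hc : ∀ n : ℕ, c + n ≠ 0) (r : ℂ)
    (hr : ‖r‖ < 1) : Summable (fun n => coefAux A B c n * r ^ n) := by
  have hl1 : (1 + ‖r‖) / 2 < 1 := by linarith
  apply summable_of_ratio_norm_eventually_le hl1
  set m : ℕ → ℂ := fun n =>
    (1 + (A - c) * (c + (n : ℂ))⁻¹) * (1 + (B - 1) * (1 + (n : ℂ))⁻¹) * r with hm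
  have hmt : Tendsto (fun n => ‖m n‖) atTop (nhds (‖r‖)) := by
    have t1 := tendsto_inv_add_aux c
    have t2 := tendsto_inv_add_aux (1 : ℂ)
    have : Tendsto m atTop (nhds ((1 + (A - c) * 0) * (1 + (B - 1) * 0) * r)) := by
      exact (((tendsto_const_nhds.add (tendsto_const_nhds.mul t1)).mul
        (tendsto_const_nhds.add (tendsto_const_nhds.mul t2))).mul tendsto_const_nhds)
    simpa using this.norm
  have hev : ∀ᶠ n : ℕ in atTop, ‖m n‖ < (1 + ‖r‖) / 2 :=
    hmt.eventually_lt_const (by linarith)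
  filter_upwards [hev] with n hn
  have key : coefAux A B c (n + 1) * r ^ (n + 1) = (coefAux A B c n * r ^ n) * m n := by
    have hcn : c + (n : ℂ) ≠ 0 := hc n
    have hC : (ascPochhammer ℂ n).eval c ≠ 0 := poch_ne_zero_aux hc n
    have hF : ((n.factorial : ℂ)) ≠ 0 := by
      exact_mod_cast Nat.cast_ne_zero.mpr n.factorial_ne_zero
    have hn1 : ((n : ℂ) + 1) ≠ 0 := by
      have : ((n + 1 : ℕ) : ℂ) ≠ 0 := Nat.cast_ne_zero.mpr (Nat.succ_ne_zero n)
      push_cast at this; exact this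
    simp only [coefAux, ascPochhammer_succ_eval, Nat.factorial_succ, hm]
    push_cast
    have h1n : (1 : ℂ) + n ≠ 0 := by rw [add_comm]; exact hn1
    field_simp
    ring
  rw [key, norm_mul]
  have h0 : (0:ℝ) ≤ ‖coefAux A B c n * r ^ n‖ := norm_nonneg _
  nlinarith [hn, norm_nonneg (m n)]

/-- Shift a sequence by one, inserting `0` in front. -/
noncomputable def shfAux (c : ℕ → ℂ) : ℕ → ℂ
  | 0 => 0
  | n + 1 => c n

lemma hasSum_shfAux {c : ℕ → ℂ} {S r : ℂ} (h : HasSum (fun n => c n * r ^ n) S) :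
    HasSum (fun n => shfAux c n * r ^ n) (r * S) := by
  have hinj : Function.Injective (fun n : ℕ => n + 1) := fun a b hab => by simpa using hab
  have h0 : ∀ x ∉ Set.range (fun n : ℕ => n + 1),
      (fun n => shfAux c n * r ^ n) x = 0 := by
    intro x hx
    have hx0 : x = 0 := by
      rcases x with _ | m
      · rfl
      · exact absurd ⟨m, rfl⟩ hx
    simp [hx0, shfAux]
  rw [← hinj.hasSum_iff h0]
  have : ((fun n => shfAux c n * r ^ n) ∘ fun n : ℕ => n + 1)
      = fun n => (c n * r ^ n) * r := by
    funext n; simp [shfAux, pow_succ, mul_assoc]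
  rw [this]
  simpa [mul_comm] using h.mul_right r

lemma poch_succ_left_eval (m : ℕ) (x : ℂ) :
    (ascPochhammer ℂ (m + 1)).eval x = x * (ascPochhammer ℂ m).eval (x + 1) := by
  rw [ascPochhammer_succ_left]
  simp [eval_comp]

lemma hyp2F1_eq_tsum_coefAux (a b c x : ℂ) :
    hyp2F1 a b c x = ∑' n : ℕ, coefAux a b c n * x ^ n := rfl

set_option maxHeartbeats 1000000 in
/-- The contiguous-relation identity:
`2k(r+2k)·₂F₁(s+k,s+k;2s;r) + 4k(s−k)·₂F₁(s+k,s+k−1;2s;r)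
  + (s−k)²·₂F₁(s+k−1,s+k−1;2s;r) = (s+k)²(1−r)²·₂F₁(s+k+1,s+k+1;2s;r)`. -/
theorem hyp2F1_contiguous_identity (k : ℕ) (hk : 1 ≤ k) (s : ℂ)
    (hs : ∀ n : ℕ, 2 * s ≠ -(n : ℂ)) (r : ℂ) (hr : ‖r‖ < 1) :
    2 * k * (r + 2 * k) * hyp2F1 (s + k) (s + k) (2 * s) r
      + 4 * k * (s - k) * hyp2F1 (s + k) (s + k - 1) (2 * s) r
      + (s - k) ^ 2 * hyp2F1 (s + k - 1) (s + k - 1) (2 * s) r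
    = (s + k) ^ 2 * (1 - r) ^ 2 * hyp2F1 (s + k + 1) (s + k + 1) (2 * s) r := by
  have hc : ∀ n : ℕ, 2 * s + (n : ℂ) ≠ 0 := by
    intro n h
    exact hs n (by linear_combination h)
  rw [hyp2F1_eq_tsum_coefAux, hyp2F1_eq_tsum_coefAux, hyp2F1_eq_tsum_coefAux,
    hyp2F1_eq_tsum_coefAux]
  set c1 : ℕ → ℂ := coefAux (s + k) (s + k) (2 * s) with hc1
  set c2 : ℕ → ℂ := coefAux (s + k) (s + k - 1) (2 * s) with hc2
  set c3 : ℕ → ℂ := coefAux (s + k - 1) (s + k - 1) (2 * s) with hc3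
  set c4 : ℕ → ℂ := coefAux (s + k + 1) (s + k + 1) (2 * s) with hc4
  have hS1 : HasSum (fun n => c1 n * r ^ n) (∑' n : ℕ, c1 n * r ^ n) :=
    (summable_coefAux _ _ _ hc r hr).hasSum
  have hS2 : HasSum (fun n => c2 n * r ^ n) (∑' n : ℕ, c2 n * r ^ n) :=
    (summable_coefAux _ _ _ hc r hr).hasSum
  have hS3 : HasSum (fun n => c3 n * r ^ n) (∑' n : ℕ, c3 n * r ^ n) :=
    (summable_coefAux _ _ _ hc r hr).hasSum
  have hS4 : HasSum (fun n => c4 n * r ^ n) (∑' n : ℕ, c4 n * r ^ n) :=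
    (summable_coefAux _ _ _ hc r hr).hasSum
  set S1 := ∑' n : ℕ, c1 n * r ^ n
  set S2 := ∑' n : ℕ, c2 n * r ^ n
  set S3 := ∑' n : ℕ, c3 n * r ^ n
  set S4 := ∑' n : ℕ, c4 n * r ^ n
  have HL : HasSum (fun n =>
      (2 * (k : ℂ)) * (shfAux c1 n * r ^ n) + (4 * (k : ℂ) ^ 2) * (c1 n * r ^ n)
        + ((4 * (k : ℂ) * (s - k)) * (c2 n * r ^ n) + ((s - k) ^ 2) * (c3 n * r ^ n)))
      ((2 * (k : ℂ)) * (r * S1) + (4 * (k : ℂ) ^ 2) * S1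
        + ((4 * (k : ℂ) * (s - k)) * S2 + ((s - k) ^ 2) * S3)) :=
    (((hasSum_shfAux hS1).mul_left _).add (hS1.mul_left _)).add
      ((hS2.mul_left _).add (hS3.mul_left _))
  have HR : HasSum (fun n =>
      ((s + k) ^ 2) * ((c4 n * r ^ n - 2 * (shfAux c4 n * r ^ n))
        + shfAux (shfAux c4) n * r ^ n))
      (((s + k) ^ 2) * ((S4 - 2 * (r * S4)) + r * (r * S4))) :=
    ((hS4.sub ((hasSum_shfAux hS4).mul_left 2)).add
      (hasSum_shfAux (hasSum_shfAux hS4))).mul_left _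
  have hfun : (fun n =>
      (2 * (k : ℂ)) * (shfAux c1 n * r ^ n) + (4 * (k : ℂ) ^ 2) * (c1 n * r ^ n)
        + ((4 * (k : ℂ) * (s - k)) * (c2 n * r ^ n) + ((s - k) ^ 2) * (c3 n * r ^ n)))
      = (fun n => ((s + k) ^ 2) * ((c4 n * r ^ n - 2 * (shfAux c4 n * r ^ n))
        + shfAux (shfAux c4) n * r ^ n)) := by
    funext n
    have h2s : (2 : ℂ) * s ≠ 0 := by simpa using hc 0
    match n with
    | 0 =>
        simp only [shfAux, hc1, hc2, hc3, hc4, coefAux, ascPochhammer_zero, eval_one,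
          Nat.factorial_zero, Nat.cast_one, mul_one, pow_zero, one_mul, zero_mul,
          mul_zero, div_one]
        ring
    | 1 =>
        simp only [shfAux, hc1, hc2, hc3, hc4, coefAux]
        simp only [ascPochhammer_one, eval_X, Nat.factorial_one, Nat.cast_one, mul_one,
          ascPochhammer_zero, eval_one, Nat.factorial_zero]
        have hs0 : s ≠ 0 := right_ne_zero_of_mul h2s
        field_simp
        ring
    | (n + 2) =>
        have hC : (ascPochhammer ℂ n).eval (2 * s) ≠ 0 := poch_ne_zero_aux hc n
        have hcn : 2 * s + (n : ℂ) ≠ 0 := hc n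
        have hcn1 : 2 * s + (n : ℂ) + 1 ≠ 0 := by
          have := hc (n + 1); push_cast at this; rw [← add_assoc] at this; exact this
        have hcn1' : 2 * s + ((n : ℂ) + 1) ≠ 0 := by rw [← add_assoc]; exact hcn1
        have hF : ((n.factorial : ℂ)) ≠ 0 :=
          Nat.cast_ne_zero.mpr n.factorial_ne_zero
        have hn1 : ((n : ℂ) + 1) ≠ 0 := by
          have : ((n + 1 : ℕ) : ℂ) ≠ 0 := Nat.cast_ne_zero.mpr (Nat.succ_ne_zero n)
          push_cast at this; exact this
        have hn2 : ((n : ℂ) + 2) ≠ 0 := by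
          have : ((n + 2 : ℕ) : ℂ) ≠ 0 := Nat.cast_ne_zero.mpr (by omega)
          push_cast at this; exact this
        have hn2' : ((n : ℂ) + 1 + 1) ≠ 0 := by
          rw [show ((n : ℂ) + 1 + 1) = (n : ℂ) + 2 from by ring]; exact hn2
        set E : ℂ := (ascPochhammer ℂ n).eval (s + k + 1) with hE
        set C : ℂ := (ascPochhammer ℂ n).eval (2 * s) with hCC
        set F : ℂ := ((n.factorial : ℕ) : ℂ) with hFF
        set D : ℂ := C * F * (2 * s + (n : ℂ)) * (2 * s + (n : ℂ) + 1)
          * ((n : ℂ) + 1) * ((n : ℂ) + 2) with hD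
        have hDne : D ≠ 0 := by
          rw [hD]
          exact mul_ne_zero (mul_ne_zero (mul_ne_zero (mul_ne_zero
            (mul_ne_zero hC hF) hcn) hcn1) hn1) hn2
        have key1 : c1 (n + 1) = (s + k) ^ 2 * E ^ 2 * ((2 * s + (n : ℂ) + 1) * ((n : ℂ) + 2)) / D := by
          rw [hc1]
          simp only [coefAux, poch_succ_left_eval n (s + k), ascPochhammer_succ_eval n (2 * s),
            Nat.factorial_succ]
          push_cast
          rw [← hE, ← hCC, ← hFF]
          refine (div_eq_div_iff ?_ hDne).mpr ?_
          · repeat' apply mul_ne_zero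
            all_goals assumption
          · rw [hD]; ring
        have key2 : c1 (n + 2) = (s + k) ^ 2 * E ^ 2 * (s + k + 1 + (n : ℂ)) ^ 2 / D := by
          rw [hc1]
          simp only [coefAux, poch_succ_left_eval (n + 1) (s + k),
            ascPochhammer_succ_eval n (s + k + 1), ascPochhammer_succ_eval (n + 1) (2 * s),
            ascPochhammer_succ_eval n (2 * s), Nat.factorial_succ]
          push_cast
          rw [← hE, ← hCC, ← hFF]
          refine (div_eq_div_iff ?_ hDne).mpr ?_
          · repeat' apply mul_ne_zero
            all_goals assumption
          · rw [hD]; ring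
        have key3 : c2 (n + 2) = (s + k) ^ 2 * (s + k - 1) * E ^ 2 * (s + k + 1 + (n : ℂ)) / D := by
          rw [hc2]
          simp only [coefAux, poch_succ_left_eval (n + 1) (s + k),
            poch_succ_left_eval (n + 1) (s + k - 1), show s + k - 1 + 1 = s + k from by ring,
            poch_succ_left_eval n (s + k), ascPochhammer_succ_eval n (s + k + 1),
            ascPochhammer_succ_eval (n + 1) (2 * s), ascPochhammer_succ_eval n (2 * s),
            Nat.factorial_succ]
          push_cast
          rw [← hE, ← hCC, ← hFF]
          refine (div_eq_div_iff ?_ hDne).mpr ?_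
          · repeat' apply mul_ne_zero
            all_goals assumption
          · rw [hD]; ring
        have key4 : c3 (n + 2) = (s + k) ^ 2 * (s + k - 1) ^ 2 * E ^ 2 / D := by
          rw [hc3]
          simp only [coefAux, poch_succ_left_eval (n + 1) (s + k - 1),
            show s + k - 1 + 1 = s + k from by ring, poch_succ_left_eval n (s + k),
            ascPochhammer_succ_eval (n + 1) (2 * s), ascPochhammer_succ_eval n (2 * s),
            Nat.factorial_succ]
          push_cast
          rw [← hE, ← hCC, ← hFF]
          refine (div_eq_div_iff ?_ hDne).mpr ?_
          · repeat' apply mul_ne_zero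
            all_goals assumption
          · rw [hD]; ring
        have key5 : c4 (n + 2)
            = E ^ 2 * (s + k + 1 + (n : ℂ)) ^ 2 * (s + k + 2 + (n : ℂ)) ^ 2 / D := by
          rw [hc4]
          simp only [coefAux, ascPochhammer_succ_eval (n + 1) (s + k + 1),
            ascPochhammer_succ_eval n (s + k + 1), ascPochhammer_succ_eval (n + 1) (2 * s),
            ascPochhammer_succ_eval n (2 * s), Nat.factorial_succ]
          push_cast
          rw [← hE, ← hCC, ← hFF]
          refine (div_eq_div_iff ?_ hDne).mpr ?_
          · repeat' apply mul_ne_zero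
            all_goals assumption
          · rw [hD]; ring
        have key6 : c4 (n + 1)
            = E ^ 2 * (s + k + 1 + (n : ℂ)) ^ 2 * ((2 * s + (n : ℂ) + 1) * ((n : ℂ) + 2)) / D := by
          rw [hc4]
          simp only [coefAux, ascPochhammer_succ_eval n (s + k + 1),
            ascPochhammer_succ_eval n (2 * s), Nat.factorial_succ]
          push_cast
          rw [← hE, ← hCC, ← hFF]
          refine (div_eq_div_iff ?_ hDne).mpr ?_
          · repeat' apply mul_ne_zero
            all_goals assumption
          · rw [hD]; ring
        have key7 : c4 n = E ^ 2 * ((2 * s + (n : ℂ)) * (2 * s + (n : ℂ) + 1)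
            * ((n : ℂ) + 1) * ((n : ℂ) + 2)) / D := by
          rw [hc4]
          simp only [coefAux]
          rw [← hE, ← hCC, ← hFF]
          refine (div_eq_div_iff ?_ hDne).mpr ?_
          · repeat' apply mul_ne_zero
            all_goals assumption
          · rw [hD]; ring
        simp only [shfAux, show n + 1 + 1 = n + 2 from rfl]
        rw [key1, key2, key3, key4, key5, key6, key7]
        field_simp [hDne]
        ring
  rw [hfun] at HL
  have hkey := HL.unique HR
  calc 2 * k * (r + 2 * k) * S1 + 4 * k * (s - k) * S2 + (s - k) ^ 2 * S3
      = (2 * (k : ℂ)) * (r * S1) + (4 * (k : ℂ) ^ 2) * S1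
        + ((4 * (k : ℂ) * (s - k)) * S2 + ((s - k) ^ 2) * S3) := by ring
    _ = ((s + k) ^ 2) * ((S4 - 2 * (r * S4)) + r * (r * S4)) := hkey
    _ = (s + k) ^ 2 * (1 - r) ^ 2 * S4 := by ring
end

section
/- Let a, c ∈ ℂ with Re a > 1/2 and c not a nonpositive integer, and let w ∈ (0,1). Then ∫_{−∞}^{∞} (1+t²)^{−a} · ₂F₁(a, a; c; w/(1+t²)) dt = √π · (Γ(a−1/2)/Γ(a)) · ₂F₁(a−1/2, a; c; w). -/
open Complex Real MeasureTheory

open Filter Set Polynomial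

private lemma oas_pos (t : ℝ) : 0 < 1 + t ^ 2 := by positivity

private lemma norm_cpow_oas (s : ℂ) (t : ℝ) :
    ‖((1 + t ^ 2 : ℝ) : ℂ) ^ (-s)‖ = (1 + t ^ 2) ^ (-s.re) := by
  rw [Complex.norm_cpow_eq_rpow_re_of_pos (oas_pos t), Complex.neg_re]

private lemma integrable_rpow_oas {r : ℝ} (hr : 1 / 2 < r) :
    Integrable fun t : ℝ => (1 + t ^ 2) ^ (-r) := by
  have hc : Continuous fun t : ℝ => (1 + t ^ 2) ^ (-r) := by
    apply Continuous.rpow_const (by continuity)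
    exact fun t => Or.inl (oas_pos t).ne'
  have h1 : IntegrableOn (fun t : ℝ => (1 + t ^ 2) ^ (-r)) (Ioi 1) := by
    refine Integrable.mono' (integrableOn_Ioi_rpow_of_lt (by linarith : -(2*r) < -1) one_pos)
      hc.aestronglyMeasurable.restrict ?_
    rw [ae_restrict_iff' measurableSet_Ioi]
    refine .of_forall fun x hx => ?_
    have hx0 : (0:ℝ) < x := lt_trans one_pos hx
    rw [Real.norm_of_nonneg (Real.rpow_nonneg (oas_pos x).le _)]
    calc (1 + x ^ 2) ^ (-r) ≤ (x ^ 2) ^ (-r) :=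
          Real.rpow_le_rpow_of_nonpos (by positivity) (by linarith) (by linarith)
      _ = x ^ (-(2*r)) := by
          rw [← Real.rpow_natCast x 2, ← Real.rpow_mul hx0.le]
          norm_num
  have h2 : IntegrableOn (fun t : ℝ => (1 + t ^ 2) ^ (-r)) (Iio (-1)) := by
    have A : MeasurableEmbedding fun x : ℝ => -x :=
      (Homeomorph.neg ℝ).measurableEmbedding
    have : IntegrableOn ((fun t : ℝ => (1 + t ^ 2) ^ (-r)) ∘ fun x : ℝ => -x)
        ((fun x : ℝ => -x) ⁻¹' (Iio (-1))) := by
      simp only [Function.comp_def, neg_sq, neg_preimage, neg_Iio]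
      rw [neg_neg]; exact h1
    rw [← Measure.map_neg_eq_self (volume : Measure ℝ), A.integrableOn_map_iff]
    exact this
  have h3 : IntegrableOn (fun t : ℝ => (1 + t ^ 2) ^ (-r)) (Icc (-1) 1) :=
    hc.integrableOn_Icc
  have h4 := (h2.union h3).union h1
  rw [Iio_union_Icc_eq_Iic (by norm_num), Iic_union_Ioi] at h4
  exact integrableOn_univ.mp h4


private lemma integrable_cpow_oas {s : ℂ} (hs : 1 / 2 < s.re) :
    Integrable fun t : ℝ => ((1 + t ^ 2 : ℝ) : ℂ) ^ (-s) := by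
  have hm : AEStronglyMeasurable (fun t : ℝ => ((1 + t ^ 2 : ℝ) : ℂ) ^ (-s)) volume := by
    refine (Continuous.cpow ?_ continuous_const fun t => ?_).aestronglyMeasurable
    · exact Complex.continuous_ofReal.comp (by continuity)
    · exact Complex.ofReal_mem_slitPlane.mpr (oas_pos t)
  exact Integrable.mono' (integrable_rpow_oas hs) hm
    (.of_forall fun t => le_of_eq (norm_cpow_oas s t))


private lemma integral_cpow_oas {s : ℂ} (hs : 1 / 2 < s.re) :
    ∫ t : ℝ, ((1 + t ^ 2 : ℝ) : ℂ) ^ (-s)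
      = (Real.sqrt Real.pi : ℂ) * (Complex.Gamma (s - 1/2) / Complex.Gamma s) := by
  have hint := integrable_cpow_oas hs
  set f : ℝ → ℂ := fun t => ((1 + t ^ 2 : ℝ) : ℂ) ^ (-s) with hf
  have step1 : ∫ t : ℝ, f t = 2 * ∫ t in Ioi (0:ℝ), f t := by
    have hsplit : (∫ t in Iic (0:ℝ), f t) + ∫ t in Ioi (0:ℝ), f t = ∫ t, f t := by
      have := integral_add_compl (measurableSet_Iic (a := (0:ℝ))) hint
      rwa [compl_Iic] at this
    have hneg : ∫ t in Iic (0:ℝ), f t = ∫ t in Ioi (0:ℝ), f t := by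
      have h2 := integral_comp_neg_Iic (0:ℝ) f
      rw [neg_zero] at h2
      rw [← h2]
      refine setIntegral_congr_fun measurableSet_Iic fun x _ => ?_
      simp only [hf, neg_sq]
    rw [← hsplit, hneg]; ring
  have step2 : ∫ t in Ioi (0:ℝ), f t
      = ∫ x in Ioi (0:ℝ), (2⁻¹ * x ^ (-2⁻¹ : ℝ)) • (((1 + x : ℝ)) : ℂ) ^ (-s) := by
    rw [← integral_comp_rpow_Ioi f (p := 2⁻¹) (by norm_num)]
    refine setIntegral_congr_fun measurableSet_Ioi fun x hx => ?_
    have hx0 : (0:ℝ) < x := hx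
    have hsq : (x ^ (2⁻¹:ℝ)) ^ 2 = x := by
      rw [← Real.rpow_natCast (x ^ (2⁻¹:ℝ)) 2, ← Real.rpow_mul hx0.le]; norm_num
    simp only [hf, hsq]
    rw [show |(2⁻¹:ℝ)| = 2⁻¹ from by norm_num, show ((2:ℝ)⁻¹ - 1 : ℝ) = -2⁻¹ by norm_num]
  have himg : (fun y : ℝ => y / (1 - y)) '' Ioo 0 1 = Ioi (0:ℝ) := by
    ext x
    constructor
    · rintro ⟨y, ⟨hy0, hy1⟩, rfl⟩
      exact div_pos hy0 (by linarith)
    · intro hx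
      have hx0 : (0:ℝ) < x := hx
      refine ⟨x / (1 + x), ⟨div_pos hx0 (by linarith), ?_⟩, ?_⟩
      · rw [div_lt_one (by linarith : (0:ℝ) < 1 + x)]; linarith
      · show (x/(1+x)) / (1 - x/(1+x)) = x
        have hx1 : (1:ℝ) + x ≠ 0 := by positivity
        have h1 : 1 - x / (1 + x) = 1 / (1 + x) := by field_simp; ring
        rw [h1]
        field_simp
  have hderiv : ∀ y ∈ Ioo (0:ℝ) 1, HasDerivWithinAt (fun y : ℝ => y / (1 - y))
      (((1 - y) ^ 2)⁻¹) (Ioo 0 1) y := by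
    intro y hy
    have h1y : (1:ℝ) - y ≠ 0 := (sub_pos.mpr hy.2).ne'
    have hd := (hasDerivAt_id y).div ((hasDerivAt_id y).const_sub 1) h1y
    exact (hd.congr_deriv (by simp only [id]; ring)).hasDerivWithinAt
  have hinj : InjOn (fun y : ℝ => y / (1 - y)) (Ioo 0 1) := by
    intro y hy z hz h
    have h1y : (1:ℝ) - y ≠ 0 := (sub_pos.mpr hy.2).ne'
    have h1z : (1:ℝ) - z ≠ 0 := (sub_pos.mpr hz.2).ne'
    field_simp at h
    ring_nf at h
    linarith
  have step3 : ∫ x in Ioi (0:ℝ), (2⁻¹ * x ^ (-2⁻¹ : ℝ)) • (((1 + x : ℝ)) : ℂ) ^ (-s)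
      = ∫ y in Ioo (0:ℝ) 1, |((1 - y) ^ 2)⁻¹| •
          ((2⁻¹ * (y / (1 - y)) ^ (-2⁻¹ : ℝ)) • (((1 + y / (1 - y) : ℝ)) : ℂ) ^ (-s)) := by
    rw [← himg, integral_image_eq_integral_abs_deriv_smul measurableSet_Ioo hderiv hinj]
  have step4 : ∀ y ∈ Ioo (0:ℝ) 1, |((1 - y) ^ 2)⁻¹| •
        ((2⁻¹ * (y / (1 - y)) ^ (-2⁻¹ : ℝ)) • (((1 + y / (1 - y) : ℝ)) : ℂ) ^ (-s))
      = (2⁻¹:ℝ) • ((y:ℂ) ^ ((1/2 : ℂ) - 1) * (1 - (y:ℂ)) ^ ((s - 1/2) - 1)) := by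
    intro y hy
    obtain ⟨hy0, hy1⟩ := hy
    have h1y : (0:ℝ) < 1 - y := by linarith
    have hyC : ((1 - y : ℝ) : ℂ) = 1 - (y:ℂ) := by push_cast; ring
    have hBne : (1 - (y:ℂ)) ≠ 0 := by rw [← hyC]; exact_mod_cast h1y.ne'
    have hbase : (1 + y / (1 - y) : ℝ) = (1 - y)⁻¹ := by field_simp; ring
    have hz : (((1 + y / (1 - y) : ℝ)) : ℂ) ^ (-s) = (1 - (y:ℂ)) ^ s := by
      rw [hbase, Complex.ofReal_inv, hyC, Complex.inv_cpow _ _ ?harg, Complex.cpow_neg, inv_inv]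
      case harg =>
        rw [← hyC, Complex.arg_ofReal_of_nonneg h1y.le]
        exact Real.pi_ne_zero.symm
    have hr1 : (y / (1 - y)) ^ (-2⁻¹ : ℝ) = y ^ (-2⁻¹ : ℝ) * (1 - y) ^ (2⁻¹ : ℝ) := by
      rw [Real.div_rpow hy0.le h1y.le, Real.rpow_neg h1y.le, div_eq_mul_inv, inv_inv]
    have e1 : ((y ^ (-2⁻¹ : ℝ) : ℝ) : ℂ) = (y:ℂ) ^ ((1/2 : ℂ) - 1) := by
      rw [Complex.ofReal_cpow hy0.le]; norm_num
    have e2 : (((1 - y) ^ (2⁻¹ : ℝ) : ℝ) : ℂ) = (1 - (y:ℂ)) ^ (1/2 : ℂ) := by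
      rw [Complex.ofReal_cpow h1y.le, hyC]; norm_num
    have e3 : ((((1 - y) ^ 2)⁻¹ : ℝ) : ℂ) = (1 - (y:ℂ)) ^ (-2 : ℂ) := by
      rw [show ((-2:ℂ)) = -((2:ℕ):ℂ) by norm_num, Complex.cpow_neg, Complex.cpow_natCast,
        ← hyC, ← Complex.ofReal_pow, ← Complex.ofReal_inv]
    have e4 : (1 - (y:ℂ)) ^ (-2:ℂ) * ((1 - (y:ℂ)) ^ (1/2:ℂ) * (1 - (y:ℂ)) ^ s)
        = (1 - (y:ℂ)) ^ ((s - 1/2) - 1) := by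
      rw [← Complex.cpow_add _ _ hBne, ← Complex.cpow_add _ _ hBne]
      norm_num
      ring_nf
    rw [abs_of_pos (by positivity : (0:ℝ) < ((1-y)^2)⁻¹), hz, hr1]
    rw [Complex.real_smul, Complex.real_smul, Complex.real_smul]
    push_cast [e3]
    rw [e1, e2, ← e4]
    ring
  have step5 : ∫ y in Ioo (0:ℝ) 1,
        (2⁻¹:ℝ) • ((y:ℂ) ^ ((1/2:ℂ)-1) * (1 - (y:ℂ)) ^ ((s-1/2)-1))
      = (2⁻¹:ℝ) • Complex.betaIntegral (1/2) (s - 1/2) := by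
    rw [integral_smul]
    congr 1
    rw [Complex.betaIntegral, intervalIntegral.integral_of_le zero_le_one,
      ← MeasureTheory.integral_Ioc_eq_integral_Ioo]
  have hbeta : Complex.betaIntegral (1/2) (s - 1/2)
      = Complex.Gamma (1/2) * Complex.Gamma (s - 1/2) / Complex.Gamma s := by
    have h := Complex.Gamma_mul_Gamma_eq_betaIntegral (s := (1/2:ℂ)) (t := s - 1/2)
      (by norm_num) (by rw [Complex.sub_re]; norm_num; linarith)
    rw [show (1/2 : ℂ) + (s - 1/2) = s by ring] at h
    have hG : Complex.Gamma s ≠ 0 := Complex.Gamma_ne_zero_of_re_pos (by linarith)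
    rw [eq_div_iff hG, mul_comm _ (Complex.Gamma s), h]
  have hGhalf : Complex.Gamma (1/2) = ((Real.sqrt Real.pi : ℝ) : ℂ) := by
    rw [Complex.Gamma_one_half_eq, Real.sqrt_eq_rpow, Complex.ofReal_cpow Real.pi_pos.le]
    norm_num
  rw [step1, step2, step3, setIntegral_congr_fun measurableSet_Ioo step4, step5, hbeta, hGhalf,
    Complex.real_smul]
  push_cast
  ring

private lemma gamma_shift {z : ℂ} (hz : 0 < z.re) (n : ℕ) :
    Complex.Gamma (z + n) = (ascPochhammer ℂ n).eval z * Complex.Gamma z := by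
  induction n with
  | zero => simp
  | succ n ih =>
    have hne : z + n ≠ 0 := by
      intro h
      have : (z + (n:ℂ)).re = 0 := by rw [h]; simp
      rw [Complex.add_re, Complex.natCast_re] at this
      have : (0:ℝ) ≤ (n:ℝ) := n.cast_nonneg
      linarith
    rw [show z + ((n+1 : ℕ) : ℂ) = (z + n) + 1 by push_cast; ring,
      Complex.Gamma_add_one _ hne, ih, ascPochhammer_succ_eval]
    ring

private lemma poch_ne_zero {z : ℂ} (hz : ∀ n : ℕ, z ≠ -(n : ℂ)) (n : ℕ) :
    (ascPochhammer ℂ n).eval z ≠ 0 := by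
  induction n with
  | zero => simp
  | succ n ih =>
    rw [ascPochhammer_succ_eval]
    refine mul_ne_zero ih fun h => hz n ?_
    linear_combination h

private lemma re_pos_avoid {z : ℂ} (hz : 0 < z.re) : ∀ n : ℕ, z ≠ -(n : ℂ) := by
  intro n h
  have : z.re = -(n:ℝ) := by rw [h]; simp
  have : (0:ℝ) ≤ (n:ℝ) := n.cast_nonneg
  linarith [hz]

-- summability
private lemma summable_ratio {a b c : ℂ} (ha : ∀ n : ℕ, a ≠ -(n:ℂ)) (hb : ∀ n : ℕ, b ≠ -(n:ℂ))
    (hc : ∀ n : ℕ, c ≠ -(n:ℂ)) {w : ℝ} (hw0 : 0 < w) (hw1 : w < 1) :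
    Summable fun n : ℕ => ‖(ascPochhammer ℂ n).eval a * (ascPochhammer ℂ n).eval b /
      ((ascPochhammer ℂ n).eval c * (n.factorial : ℂ)) * (w:ℂ) ^ n‖ := by
  set f : ℕ → ℂ := fun n => (ascPochhammer ℂ n).eval a * (ascPochhammer ℂ n).eval b /
      ((ascPochhammer ℂ n).eval c * (n.factorial : ℂ)) * (w:ℂ) ^ n with hf
  have hfne : ∀ n, f n ≠ 0 := by
    intro n
    apply mul_ne_zero
    · apply div_ne_zero (mul_ne_zero (poch_ne_zero ha n) (poch_ne_zero hb n))
      exact mul_ne_zero (poch_ne_zero hc n) (Nat.cast_ne_zero.mpr n.factorial_ne_zero)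
    · exact pow_ne_zero n (by exact_mod_cast hw0.ne')
  have hL : ∀ z : ℂ, Tendsto (fun n : ℕ => (z + n) / ((n:ℂ) + 1)) atTop (nhds 1) := by
    intro z
    have h0 : Tendsto (fun n : ℕ => ((n:ℂ) + 1)⁻¹) atTop (nhds 0) := by
      rw [tendsto_zero_iff_norm_tendsto_zero]
      have : ∀ n : ℕ, ‖((n:ℂ) + 1)⁻¹‖ = ((n:ℝ) + 1)⁻¹ := by
        intro n
        rw [norm_inv]
        congr 1
        rw [show ((n:ℂ) + 1) = ((n + 1 : ℕ) : ℂ) by push_cast; ring, Complex.norm_natCast]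
        push_cast; ring
      simp only [this]
      exact tendsto_inv_atTop_zero.comp
        (tendsto_atTop_add_const_right _ 1 tendsto_natCast_atTop_atTop)
    have heq : ∀ n : ℕ, (z + n) / ((n:ℂ) + 1) = 1 + (z - 1) * ((n:ℂ) + 1)⁻¹ := by
      intro n
      have hne : ((n:ℂ) + 1) ≠ 0 := by
        exact_mod_cast (Nat.cast_add_one_ne_zero n (R := ℂ))
      field_simp
      ring
    simp only [heq]
    have := (h0.const_mul (z - 1)).const_add 1
    simpa using this
  have hratio : Tendsto (fun n : ℕ => ‖f (n + 1)‖ / ‖f n‖) atTop (nhds w) := by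
    have key : ∀ n : ℕ, ‖f (n + 1)‖ / ‖f n‖
        = ‖(((a + n) / ((n:ℂ)+1)) * (((b + n) / ((n:ℂ)+1)) / ((c + n) / ((n:ℂ)+1)))) * (w:ℂ)‖ := by
      intro n
      have h1 : f (n + 1) = f n *
          ((((a + n) / ((n:ℂ)+1)) * (((b + n) / ((n:ℂ)+1)) / ((c + n) / ((n:ℂ)+1)))) * (w:ℂ)) := by
        simp only [hf]
        rw [ascPochhammer_succ_eval, ascPochhammer_succ_eval, ascPochhammer_succ_eval,
          Nat.factorial_succ, pow_succ]
        have hcn : (c:ℂ) + n ≠ 0 := fun h => hc n (by linear_combination h)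
        have hn1 : ((n:ℂ) + 1) ≠ 0 := by exact_mod_cast (Nat.cast_add_one_ne_zero n (R := ℂ))
        have hpc := poch_ne_zero hc n
        have hfac : ((n.factorial : ℂ)) ≠ 0 := Nat.cast_ne_zero.mpr n.factorial_ne_zero
        field_simp

        push_cast; ring
      rw [h1, norm_mul, mul_div_cancel_left₀ _ (norm_ne_zero_iff.mpr (hfne n))]
    simp only [key]
    have hRlim : Tendsto (fun n : ℕ =>
        (((a + n) / ((n:ℂ)+1)) * (((b + n) / ((n:ℂ)+1)) / ((c + n) / ((n:ℂ)+1)))) * (w:ℂ))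
        atTop (nhds ((1 * (1 / 1)) * (w:ℂ))) :=
      ((hL a).mul (((hL b).div (hL c) one_ne_zero))).mul_const _
    have := hRlim.norm
    simp only [one_div, inv_one, mul_one, one_mul] at this
    simpa [Complex.norm_real, abs_of_pos hw0] using this
  have hsum : Summable f :=
    summable_of_ratio_test_tendsto_lt_one hw1 (Eventually.of_forall hfne) hratio
  exact summable_norm_iff.mpr hsum

/-- `∫_{−∞}^{∞} (1+t²)^{−a} ₂F₁(a,a;c;w/(1+t²)) dt
     = √π · (Γ(a−1/2)/Γ(a)) · ₂F₁(a−1/2,a;c;w)`. -/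
theorem integral_hyp2F1 (a c : ℂ) (ha : 1 / 2 < a.re)
    (hc : ∀ n : ℕ, c ≠ -(n : ℂ)) (w : ℝ) (hw : w ∈ Set.Ioo (0 : ℝ) 1) :
    ∫ t : ℝ, ((1 + t ^ 2 : ℝ) : ℂ) ^ (-a) *
        hyp2F1 a a c ((w / (1 + t ^ 2) : ℝ) : ℂ)
      = (Real.sqrt Real.pi : ℂ) * (Complex.Gamma (a - 1 / 2) / Complex.Gamma a) *
          hyp2F1 (a - 1 / 2) a c (w : ℂ) := by
  obtain ⟨hw0, hw1⟩ := hw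
  have ha0 : 0 < a.re := by linarith
  have ha' : 0 < (a - 1/2).re := by rw [Complex.sub_re]; norm_num; linarith
  set F : ℕ → ℝ → ℂ := fun n t => ((1 + t ^ 2 : ℝ) : ℂ) ^ (-a) *
      ((ascPochhammer ℂ n).eval a * (ascPochhammer ℂ n).eval a /
        ((ascPochhammer ℂ n).eval c * (n.factorial : ℂ)) * ((w / (1 + t ^ 2) : ℝ) : ℂ) ^ n)
    with hF
  have hpt : ∀ t : ℝ, ((1 + t ^ 2 : ℝ) : ℂ) ^ (-a) * hyp2F1 a a c ((w / (1 + t ^ 2) : ℝ) : ℂ)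
      = ∑' n, F n t := by
    intro t
    rw [hyp2F1, ← tsum_mul_left]
  have hFeq : ∀ n t, F n t = (ascPochhammer ℂ n).eval a * (ascPochhammer ℂ n).eval a /
        ((ascPochhammer ℂ n).eval c * (n.factorial : ℂ)) * (w:ℂ) ^ n *
        ((1 + t ^ 2 : ℝ) : ℂ) ^ (-(a + n)) := by
    intro n t
    have h0 : ((1 + t ^ 2 : ℝ) : ℂ) ≠ 0 := by exact_mod_cast (oas_pos t).ne'
    rw [hF]
    simp only []
    rw [Complex.ofReal_div, div_pow, show (-(a + (n:ℂ))) = -a + -(n:ℂ) by ring,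
      Complex.cpow_add _ _ h0, Complex.cpow_neg, Complex.cpow_neg, Complex.cpow_natCast]
    ring
  have hre : ∀ n : ℕ, 1/2 < (a + (n:ℂ)).re := by
    intro n
    rw [Complex.add_re, Complex.natCast_re]
    have : (0:ℝ) ≤ (n:ℝ) := n.cast_nonneg
    linarith
  have hFint : ∀ n, Integrable (F n) := by
    intro n
    refine ((integrable_cpow_oas (hre n)).const_mul
      ((ascPochhammer ℂ n).eval a * (ascPochhammer ℂ n).eval a /
        ((ascPochhammer ℂ n).eval c * (n.factorial : ℂ)) * (w:ℂ) ^ n)).congr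
      (Eventually.of_forall fun t => ?_)
    rw [hFeq]
  have hnorm : ∀ n t, ‖F n t‖ ≤ ‖(ascPochhammer ℂ n).eval a * (ascPochhammer ℂ n).eval a /
        ((ascPochhammer ℂ n).eval c * (n.factorial : ℂ)) * (w:ℂ) ^ n‖ *
        (1 + t ^ 2) ^ (-a.re) := by
    intro n t
    rw [hFeq, norm_mul, norm_cpow_oas]
    refine mul_le_mul_of_nonneg_left ?_ (norm_nonneg _)
    refine Real.rpow_le_rpow_of_exponent_le (by nlinarith [sq_nonneg t]) ?_
    rw [Complex.add_re, Complex.natCast_re]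
    have : (0:ℝ) ≤ (n:ℝ) := n.cast_nonneg
    linarith
  have hKint : Integrable (fun t : ℝ => (1 + t ^ 2) ^ (-a.re)) := integrable_rpow_oas ha
  have hsum0 := summable_ratio (re_pos_avoid ha0) (re_pos_avoid ha0) hc hw0 hw1
  have hFsum : Summable fun n : ℕ => ∫ t : ℝ, ‖F n t‖ := by
    refine Summable.of_nonneg_of_le (fun n => integral_nonneg fun t => norm_nonneg _)
      (fun n => ?_) (hsum0.mul_right (∫ t : ℝ, (1 + t ^ 2) ^ (-a.re)))
    calc ∫ t : ℝ, ‖F n t‖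
        ≤ ∫ t : ℝ, ‖(ascPochhammer ℂ n).eval a * (ascPochhammer ℂ n).eval a /
            ((ascPochhammer ℂ n).eval c * (n.factorial : ℂ)) * (w:ℂ) ^ n‖ *
            (1 + t ^ 2) ^ (-a.re) :=
          integral_mono (hFint n).norm (hKint.const_mul _) (fun t => hnorm n t)
      _ = _ := integral_const_mul _ _
  have hswap : ∫ t : ℝ, ∑' n, F n t = ∑' n, ∫ t : ℝ, F n t :=
    (MeasureTheory.integral_tsum_of_summable_integral_norm hFint hFsum).symm
  have hGa : Complex.Gamma a ≠ 0 := Complex.Gamma_ne_zero_of_re_pos ha0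
  have hInt : ∀ n : ℕ, ∫ t : ℝ, F n t
      = (Real.sqrt Real.pi : ℂ) * (Complex.Gamma (a - 1 / 2) / Complex.Gamma a) *
        ((ascPochhammer ℂ n).eval (a - 1/2) * (ascPochhammer ℂ n).eval a /
          ((ascPochhammer ℂ n).eval c * (n.factorial : ℂ)) * (w:ℂ) ^ n) := by
    intro n
    have step : ∫ t : ℝ, F n t = (ascPochhammer ℂ n).eval a * (ascPochhammer ℂ n).eval a /
        ((ascPochhammer ℂ n).eval c * (n.factorial : ℂ)) * (w:ℂ) ^ n *
        ((Real.sqrt Real.pi : ℂ) * (Complex.Gamma ((a + n) - 1/2) / Complex.Gamma (a + n))) := by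
      simp only [hFeq]
      rw [integral_const_mul, integral_cpow_oas (hre n)]
    rw [step]
    have hsh1 : Complex.Gamma ((a + n) - 1/2)
        = (ascPochhammer ℂ n).eval (a - 1/2) * Complex.Gamma (a - 1/2) := by
      have h := gamma_shift ha' n
      rwa [show (a - 1/2) + n = a + n - 1/2 by ring] at h
    have hsh2 : Complex.Gamma (a + n) = (ascPochhammer ℂ n).eval a * Complex.Gamma a :=
      gamma_shift ha0 n
    rw [hsh1, hsh2]
    have hpa := poch_ne_zero (re_pos_avoid ha0) n
    have hpc := poch_ne_zero hc n
    have hfac : ((n.factorial : ℂ)) ≠ 0 := Nat.cast_ne_zero.mpr n.factorial_ne_zero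
    field_simp
  have hstart : (∫ t : ℝ, ((1 + t ^ 2 : ℝ) : ℂ) ^ (-a) *
      hyp2F1 a a c ((w / (1 + t ^ 2) : ℝ) : ℂ)) = ∫ t : ℝ, ∑' n, F n t :=
    integral_congr_ae (Eventually.of_forall hpt)
  rw [hstart, hswap, tsum_congr hInt, tsum_mul_left, hyp2F1]
end

section
/- Let k ≥ 1 be an integer, let x ∈ (0,1), and let s ∈ ℂ be such that 2s is not a nonpositive integer and 2s ∉ {2, 3, …, 2k}. Then ₂F₁( 2s+2k−1, 2k; 2s; x ) = (1−x)^{−2k} · ( ∏_{i=0}^{2k−2} (2s+i) )^{−1} · ( ∏_{i=2}^{2k} (2s−i) ) · ₂F₁( −(2k−1), 2k; 2−2s; 1/(1−x) ). -/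
open Complex Finset

open Polynomial in
lemma poch_eval_add (a : ℂ) (n m : ℕ) :
    (ascPochhammer ℂ (n + m)).eval a
      = (ascPochhammer ℂ n).eval a * (ascPochhammer ℂ m).eval (a + n) := by
  rw [← ascPochhammer_mul, eval_mul, eval_comp, eval_add, eval_X, eval_natCast]

open Polynomial in
lemma poch_eval_prod (a : ℂ) (n : ℕ) :
    (ascPochhammer ℂ n).eval a = ∏ i ∈ Finset.range n, (a + i) := by
  induction n with
  | zero => simp
  | succ n ih => rw [ascPochhammer_succ_eval, ih, Finset.prod_range_succ]

open Polynomial in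
lemma poch_eval_succ_left' (a : ℂ) (n : ℕ) :
    (ascPochhammer ℂ (n + 1)).eval a = a * (ascPochhammer ℂ n).eval (a + 1) := by
  rw [ascPochhammer_succ_left, eval_mul, eval_X, eval_comp, eval_add, eval_X, eval_one]

open Polynomial in
lemma poch_ne_zero_s8 {a : ℂ} (n : ℕ) (h : ∀ i : ℕ, a + i ≠ 0) :
    (ascPochhammer ℂ n).eval a ≠ 0 := by
  rw [poch_eval_prod]
  exact Finset.prod_ne_zero_iff.mpr fun i _ => h i

open Polynomial in
lemma poch_neg_nat (N m : ℕ) :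
    (ascPochhammer ℂ m).eval (-(N : ℂ)) = (-1) ^ m * (N.choose m) * m.factorial := by
  rw [ascPochhammer_eval_neg_eq_descPochhammer]
  have : (descPochhammer ℂ m).eval (N : ℂ) = ((N.descFactorial m : ℕ) : ℂ) := by
    exact_mod_cast descPochhammer_eval_eq_descFactorial ℂ N m
  rw [this, Nat.descFactorial_eq_factorial_mul_choose]
  push_cast; ring

open Polynomial in
lemma chu (b : ℂ) : ∀ (N : ℕ) (c : ℂ),
    ∑ m ∈ Finset.range (N + 1), (-1 : ℂ) ^ m * (N.choose m) *
        (ascPochhammer ℂ m).eval b * (ascPochhammer ℂ (N - m)).eval (c + m)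
      = (ascPochhammer ℂ N).eval (c - b) := by
  intro N
  induction N with
  | zero => intro c; simp
  | succ N ih =>
    intro c
    set t : ℕ → ℂ := fun j => (ascPochhammer ℂ j).eval b *
        (ascPochhammer ℂ (N + 1 - j)).eval (c + j) with ht
    set g : ℕ → ℂ := fun j => (-1 : ℂ) ^ j * (N.choose j) * t j with hg
    set f : ℕ → ℂ := fun j => (-1 : ℂ) ^ j * ((N + 1).choose j) * t j with hf
    have hgoal : ∑ m ∈ Finset.range (N + 1 + 1), (-1 : ℂ) ^ m * ((N + 1).choose m) *
        (ascPochhammer ℂ m).eval b * (ascPochhammer ℂ (N + 1 - m)).eval (c + m)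
        = ∑ j ∈ Finset.range (N + 2), f j := by
      apply Finset.sum_congr rfl
      intro m _
      simp only [hf, ht]; ring
    rw [hgoal]
    have h1 : ∑ j ∈ Finset.range (N + 2), f j
        = ∑ m ∈ Finset.range (N + 1), f (m + 1) + f 0 := Finset.sum_range_succ' f (N + 1)
    have hsplit : ∀ m, f (m + 1) = g (m + 1) + (-1 : ℂ) ^ (m + 1) * (N.choose m) * t (m + 1) := by
      intro m
      simp only [hf, hg, Nat.choose_succ_succ]
      push_cast; ring
    have h2 : ∑ m ∈ Finset.range (N + 1), f (m + 1) + f 0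
        = (∑ m ∈ Finset.range (N + 1), g (m + 1) + g 0)
          + ∑ m ∈ Finset.range (N + 1), ((-1 : ℂ) ^ (m + 1) * (N.choose m) * t (m + 1)) := by
      rw [Finset.sum_congr rfl fun m _ => hsplit m, Finset.sum_add_distrib]
      have : f 0 = g 0 := by simp [hf, hg]
      rw [this]; ring
    have h3 : ∑ m ∈ Finset.range (N + 1), g (m + 1) + g 0
        = ∑ j ∈ Finset.range (N + 2), g j := (Finset.sum_range_succ' g (N + 1)).symm
    have h4 : ∑ j ∈ Finset.range (N + 2), g j = ∑ j ∈ Finset.range (N + 1), g j := by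
      rw [Finset.sum_range_succ]
      simp [hg, Nat.choose_succ_self]
    rw [h1, h2, h3, h4, ← Finset.sum_add_distrib]
    have h5 : ∀ m ∈ Finset.range (N + 1),
        g m + (-1 : ℂ) ^ (m + 1) * (N.choose m) * t (m + 1)
          = (c - b) * ((-1 : ℂ) ^ m * (N.choose m) *
              (ascPochhammer ℂ m).eval b * (ascPochhammer ℂ (N - m)).eval ((c + 1) + m)) := by
      intro m hm
      have hmN : m ≤ N := Nat.lt_succ_iff.mp (Finset.mem_range.mp hm)
      have e1 : N + 1 - m = (N - m) + 1 := by omega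
      have e2 : N + 1 - (m + 1) = N - m := by omega
      simp only [hg, ht, e1, e2]
      rw [poch_eval_succ_left' (c + m) (N - m), ascPochhammer_succ_eval m b]
      have e3 : c + (m : ℂ) + 1 = (c + 1) + m := by ring
      have e4 : c + ((m : ℕ) + 1 : ℕ) = (c + 1) + m := by push_cast; ring
      rw [e3, e4]
      ring
    rw [Finset.sum_congr rfl h5, ← Finset.mul_sum, ih (c + 1)]
    rw [poch_eval_succ_left' (c - b) N]
    have : c + 1 - b = c - b + 1 := by ring
    rw [this]

open Polynomial in
lemma sum_poch_div_fact (a : ℂ) (n : ℕ) :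
    ∑ i ∈ Finset.range (n + 1), (ascPochhammer ℂ i).eval a / (i.factorial : ℂ)
      = (ascPochhammer ℂ n).eval (a + 1) / (n.factorial : ℂ) := by
  induction n with
  | zero => simp
  | succ n ih =>
    rw [Finset.sum_range_succ, ih, ascPochhammer_succ_eval n (a + 1),
      poch_eval_succ_left' a n]
    have h1 : ((n.factorial : ℂ)) ≠ 0 := by exact_mod_cast n.factorial_ne_zero
    have h3 : (((n + 1) : ℕ) : ℂ) ≠ 0 := Nat.cast_ne_zero.mpr (Nat.succ_ne_zero n)
    rw [Nat.factorial_succ, Nat.cast_mul]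
    rw [div_add_div _ _ h1 (mul_ne_zero h3 h1),
      div_eq_div_iff (mul_ne_zero h1 (mul_ne_zero h3 h1)) (mul_ne_zero h3 h1)]
    push_cast
    ring

open Polynomial in
lemma hasSum_poch (d : ℕ) {z : ℂ} (hz : ‖z‖ < 1) :
    HasSum (fun n : ℕ => (ascPochhammer ℂ n).eval (d : ℂ) / (n.factorial : ℂ) * z ^ n)
      (((1 - z)⁻¹) ^ d) := by
  induction d with
  | zero =>
    have : ∀ n : ℕ, n ≠ 0 →
        (ascPochhammer ℂ n).eval ((0 : ℕ) : ℂ) / (n.factorial : ℂ) * z ^ n = 0 := by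
      intro n hn
      rw [Nat.cast_zero, ascPochhammer_eval_zero, if_neg hn]
      simp
    have h := hasSum_single (f := fun n : ℕ =>
      (ascPochhammer ℂ n).eval ((0 : ℕ) : ℂ) / (n.factorial : ℂ) * z ^ n) 0 (by
        intro b hb; exact this b hb)
    simpa using h
  | succ d ih =>
    have hf : Summable (fun n : ℕ =>
        ‖(ascPochhammer ℂ n).eval (d : ℂ) / (n.factorial : ℂ) * z ^ n‖) :=
      summable_norm_iff.mpr ih.summable
    have hgeo : HasSum (fun n : ℕ => z ^ n) (1 - z)⁻¹ := hasSum_geometric_of_norm_lt_one hz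
    have hg : Summable (fun n : ℕ => ‖z ^ n‖) :=
      summable_norm_iff.mpr hgeo.summable
    have hsum : Summable (fun n : ℕ => ∑ kl ∈ Finset.HasAntidiagonal.antidiagonal n,
        ((ascPochhammer ℂ kl.1).eval (d : ℂ) / (kl.1.factorial : ℂ) * z ^ kl.1) * z ^ kl.2) :=
      (summable_norm_sum_mul_antidiagonal_of_summable_norm hf hg).of_norm
    have htsum := tsum_mul_tsum_eq_tsum_sum_antidiagonal_of_summable_norm hf hg
    rw [ih.tsum_eq, hgeo.tsum_eq] at htsum
    have hval : HasSum (fun n : ℕ => ∑ kl ∈ Finset.HasAntidiagonal.antidiagonal n,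
        ((ascPochhammer ℂ kl.1).eval (d : ℂ) / (kl.1.factorial : ℂ) * z ^ kl.1) * z ^ kl.2)
        (((1 - z)⁻¹) ^ (d + 1)) := by
      have hv := hsum.hasSum
      rw [← htsum, ← pow_succ] at hv
      exact hv
    have hterm : ∀ n : ℕ, ∑ kl ∈ Finset.HasAntidiagonal.antidiagonal n,
        ((ascPochhammer ℂ kl.1).eval (d : ℂ) / (kl.1.factorial : ℂ) * z ^ kl.1) * z ^ kl.2
        = (ascPochhammer ℂ n).eval (((d : ℕ) + 1 : ℕ) : ℂ) / (n.factorial : ℂ) * z ^ n := by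
      intro n
      rw [Finset.Nat.sum_antidiagonal_eq_sum_range_succ
        (f := fun k l => ((ascPochhammer ℂ k).eval (d : ℂ) / (k.factorial : ℂ) * z ^ k) * z ^ l)]
      have : ∀ i ∈ Finset.range (n + 1),
          ((ascPochhammer ℂ i).eval (d : ℂ) / (i.factorial : ℂ) * z ^ i) * z ^ (n - i)
            = ((ascPochhammer ℂ i).eval (d : ℂ) / (i.factorial : ℂ)) * z ^ n := by
        intro i hi
        have : i + (n - i) = n := by
          have := Nat.lt_succ_iff.mp (Finset.mem_range.mp hi); omega
        rw [mul_assoc, ← pow_add, this]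
      rw [Finset.sum_congr rfl this, ← Finset.sum_mul, sum_poch_div_fact]
      push_cast
      ring
    exact funext hterm ▸ hval

/-- `₂F₁(2s+2k−1, 2k; 2s; x) = (1−x)^{−2k} (∏_{i=0}^{2k−2}(2s+i))⁻¹ (∏_{i=2}^{2k}(2s−i))
      · ₂F₁(−(2k−1), 2k; 2−2s; 1/(1−x))`. -/
theorem hyp2F1_linear_transform (k : ℕ) (hk : 1 ≤ k) (x : ℝ) (hx : x ∈ Set.Ioo (0 : ℝ) 1)
    (s : ℂ) (hs1 : ∀ n : ℕ, 2 * s ≠ -(n : ℂ))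
    (hs2 : ∀ m : ℕ, 2 ≤ m → m ≤ 2 * k → 2 * s ≠ (m : ℂ)) :
    hyp2F1 (2 * s + 2 * k - 1) (2 * k) (2 * s) (x : ℂ)
      = ((1 - x : ℝ) : ℂ) ^ (-(2 * k : ℤ)) *
          (∏ i ∈ Finset.range (2 * k - 1), (2 * s + i))⁻¹ *
          (∏ i ∈ Finset.Icc 2 (2 * k), (2 * s - i)) *
          hyp2F1 (-(2 * k - 1 : ℂ)) (2 * k) (2 - 2 * s) (((1 / (1 - x) : ℝ)) : ℂ) := by
  obtain ⟨hx0, hx1⟩ := hx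
  set z : ℂ := (x : ℂ) with hzdef
  set N : ℕ := 2 * k - 1 with hNdef
  have hKN : 2 * k = N + 1 := by omega
  have hz : ‖z‖ < 1 := by
    rw [hzdef, Complex.norm_real, Real.norm_eq_abs, abs_of_pos hx0]
    exact hx1
  have hz1 : (1 : ℂ) - z ≠ 0 := by
    rw [sub_ne_zero]
    intro h
    rw [hzdef] at h
    exact hx1.ne' (by exact_mod_cast h)
  have hNc : ((N : ℕ) : ℂ) = 2 * (k : ℂ) - 1 := by
    rw [hNdef]
    push_cast [Nat.cast_sub (by omega : 1 ≤ 2 * k)]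
    ring
  have hKc : ((2 * k : ℕ) : ℂ) = 2 * (k : ℂ) := by push_cast; ring
  have hfac : ∀ n : ℕ, ((n.factorial : ℕ) : ℂ) ≠ 0 :=
    fun n => Nat.cast_ne_zero.mpr n.factorial_ne_zero
  -- nonvanishing facts
  have hP2s : ∀ n : ℕ, (ascPochhammer ℂ n).eval (2 * s) ≠ 0 := by
    intro n
    apply poch_ne_zero_s8
    intro i h
    exact hs1 i (by linear_combination h)
  have hPK : ∀ m : ℕ, (ascPochhammer ℂ m).eval (2 * (k : ℂ)) ≠ 0 := by
    intro m
    apply poch_ne_zero_s8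
    intro i h
    have h2 : ((2 * k + i : ℕ) : ℂ) = 0 := by push_cast; linear_combination h
    have := Nat.cast_eq_zero.mp h2
    omega
  have hPc : ∀ m : ℕ, m ≤ N → (ascPochhammer ℂ m).eval (2 - 2 * s) ≠ 0 := by
    intro m hm
    rw [poch_eval_prod]
    apply Finset.prod_ne_zero_iff.mpr
    intro i hi
    have hi' : i < m := Finset.mem_range.mp hi
    intro h
    apply hs2 (2 + i) (by omega) (by omega)
    push_cast
    linear_combination -h
  have hQ : (∏ i ∈ Finset.Icc 2 (2 * k), (2 * s - (i : ℂ))) ≠ 0 := by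
    apply Finset.prod_ne_zero_iff.mpr
    intro i hi
    obtain ⟨h2i, hik⟩ := Finset.mem_Icc.mp hi
    intro h
    exact hs2 i h2i hik (by linear_combination h)
  set Q : ℂ := ∏ i ∈ Finset.Icc 2 (2 * k), (2 * s - (i : ℂ)) with hQdef
  -- Claim B : (2-2s)_N = -Q
  have claimB : (ascPochhammer ℂ N).eval (2 - 2 * s) = -Q := by
    rw [poch_eval_prod, hQdef]
    have h0 : ∏ i ∈ Finset.Icc 2 (2 * k), (2 * s - (i : ℂ))
        = ∏ j ∈ Finset.range N, (2 * s - ((2 + j : ℕ) : ℂ)) := by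
      rw [← Finset.Ico_add_one_right_eq_Icc, Finset.prod_Ico_eq_prod_range]
      have h1 : 2 * k + 1 - 2 = N := by omega
      rw [h1]
    rw [h0]
    have h2 : ∀ j ∈ Finset.range N, (2 - 2 * s + (j : ℂ))
        = (-1) * (2 * s - ((2 + j : ℕ) : ℂ)) := by
      intro j _; push_cast; ring
    rw [Finset.prod_congr rfl h2, Finset.prod_mul_distrib, Finset.prod_const,
      Finset.card_range]
    have hodd : Odd N := ⟨k - 1, by omega⟩
    rw [hodd.neg_one_pow]
    ring
  -- Claim A : (2-2s-2k-n)_N = -(2s+n)_N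
  have claimA : ∀ n : ℕ, (ascPochhammer ℂ N).eval (2 - 2 * s - (2 * (k : ℂ) + n))
      = -(ascPochhammer ℂ N).eval (2 * s + n) := by
    intro n
    rw [poch_eval_prod, poch_eval_prod]
    have h1 : ∀ j ∈ Finset.range N, (2 - 2 * s - (2 * (k : ℂ) + n) + j)
        = (-1) * ((2 * s + n) + ((N - 1 - j : ℕ) : ℂ)) := by
      intro j hj
      have hj' : j < N := Finset.mem_range.mp hj
      have : ((N - 1 - j : ℕ) : ℂ) = (N : ℂ) - 1 - j := by
        push_cast [Nat.cast_sub (by omega : j ≤ N - 1), Nat.cast_sub (by omega : 1 ≤ N)]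
        ring
      rw [this, hNc]
      ring
    rw [Finset.prod_congr rfl h1, Finset.prod_mul_distrib, Finset.prod_const,
      Finset.card_range]
    have hodd : Odd N := ⟨k - 1, by omega⟩
    rw [hodd.neg_one_pow, Finset.prod_range_reflect (fun i => (2 * s + n) + (i : ℂ)) N]
    ring
  -- weights
  set w : ℕ → ℂ := fun m => ((ascPochhammer ℂ N).eval (2 * s))⁻¹ * Q *
      ((ascPochhammer ℂ m).eval (-(N : ℂ)) * (ascPochhammer ℂ m).eval (2 * (k : ℂ)) /
        ((ascPochhammer ℂ m).eval (2 - 2 * s) * (m.factorial : ℂ))) with hwdef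
  -- the RHS hyp2F1 is a polynomial
  have hu : ((1 / (1 - x) : ℝ) : ℂ) = (1 - z)⁻¹ := by
    rw [hzdef]; push_cast; rw [one_div]
  have hRpoly : hyp2F1 (-(2 * (k : ℂ) - 1)) (2 * (k : ℂ)) (2 - 2 * s) ((1 / (1 - x) : ℝ) : ℂ)
      = ∑ m ∈ Finset.range (N + 1),
          (ascPochhammer ℂ m).eval (-(N : ℂ)) * (ascPochhammer ℂ m).eval (2 * (k : ℂ)) /
            ((ascPochhammer ℂ m).eval (2 - 2 * s) * (m.factorial : ℂ)) * ((1 - z)⁻¹) ^ m := by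
    rw [hyp2F1, hu, ← hNc]
    apply tsum_eq_sum
    intro n hn
    have hn' : N < n := by
      by_contra h
      exact hn (Finset.mem_range.mpr (by omega))
    rw [ascPochhammer_eval_neg_coe_nat_of_lt hn']
    simp
  -- the big HasSum
  have hHS : HasSum (fun n : ℕ => ∑ m ∈ Finset.range (N + 1),
        w m * ((ascPochhammer ℂ n).eval ((2 * k + m : ℕ) : ℂ) / (n.factorial : ℂ) * z ^ n))
      (∑ m ∈ Finset.range (N + 1), w m * ((1 - z)⁻¹) ^ (2 * k + m)) :=
    hasSum_sum fun m _ => (hasSum_poch (2 * k + m) hz).mul_left (w m)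
  -- the core coefficient identity
  have core : ∀ n : ℕ,
      (ascPochhammer ℂ n).eval (2 * s + 2 * (k : ℂ) - 1) * (ascPochhammer ℂ n).eval (2 * (k : ℂ))
          / (ascPochhammer ℂ n).eval (2 * s)
        = ∑ m ∈ Finset.range (N + 1),
            w m * (ascPochhammer ℂ n).eval ((2 * k + m : ℕ) : ℂ) := by
    intro n
    -- step 1
    have e1 : (ascPochhammer ℂ N).eval (2 * s) *
          (ascPochhammer ℂ n).eval (2 * s + 2 * (k : ℂ) - 1)
        = (ascPochhammer ℂ n).eval (2 * s) * (ascPochhammer ℂ N).eval (2 * s + n) := by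
      have a1 := poch_eval_add (2 * s) N n
      have a2 := poch_eval_add (2 * s) n N
      rw [add_comm N n] at a1
      have e : 2 * s + (N : ℂ) = 2 * s + 2 * (k : ℂ) - 1 := by rw [hNc]; ring
      rw [e] at a1
      linear_combination a2 - a1
    -- per-term rewrite
    have hterm : ∀ m ∈ Finset.range (N + 1),
        w m * (ascPochhammer ℂ n).eval ((2 * k + m : ℕ) : ℂ)
          = (((ascPochhammer ℂ N).eval (2 * s))⁻¹ * Q * (ascPochhammer ℂ n).eval (2 * (k : ℂ))
              / (ascPochhammer ℂ N).eval (2 - 2 * s)) *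
            ((-1 : ℂ) ^ m * (N.choose m) * (ascPochhammer ℂ m).eval (2 * (k : ℂ) + n) *
              (ascPochhammer ℂ (N - m)).eval ((2 - 2 * s) + m)) := by
      intro m hm
      have hm' : m ≤ N := Nat.lt_succ_iff.mp (Finset.mem_range.mp hm)
      -- step 2
      have e2 : (ascPochhammer ℂ m).eval (2 * (k : ℂ)) *
            (ascPochhammer ℂ n).eval ((2 * k + m : ℕ) : ℂ)
          = (ascPochhammer ℂ n).eval (2 * (k : ℂ)) *
            (ascPochhammer ℂ m).eval (2 * (k : ℂ) + n) := by
        have a1 := poch_eval_add (2 * (k : ℂ)) m n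
        have a2 := poch_eval_add (2 * (k : ℂ)) n m
        rw [add_comm m n] at a1
        have e : ((2 * k + m : ℕ) : ℂ) = 2 * (k : ℂ) + m := by push_cast; ring
        rw [e]
        linear_combination a2 - a1
      -- step 3
      have e3 : (ascPochhammer ℂ m).eval (2 - 2 * s) *
            (ascPochhammer ℂ (N - m)).eval ((2 - 2 * s) + m)
          = (ascPochhammer ℂ N).eval (2 - 2 * s) := by
        have := poch_eval_add (2 - 2 * s) m (N - m)
        rw [Nat.add_sub_cancel' hm'] at this
        linear_combination -this
      have e2' : (ascPochhammer ℂ n).eval ((2 * k + m : ℕ) : ℂ)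
          = (ascPochhammer ℂ n).eval (2 * (k : ℂ)) *
              (ascPochhammer ℂ m).eval (2 * (k : ℂ) + n) /
              (ascPochhammer ℂ m).eval (2 * (k : ℂ)) := by
        rw [eq_div_iff (hPK m)]
        linear_combination e2
      have e3' : (ascPochhammer ℂ (N - m)).eval ((2 - 2 * s) + m)
          = (ascPochhammer ℂ N).eval (2 - 2 * s) /
              (ascPochhammer ℂ m).eval (2 - 2 * s) := by
        rw [eq_div_iff (hPc m hm')]
        linear_combination e3
      have hPcm := hPc m hm'
      have hPcN := hPc N le_rfl
      rw [hwdef]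
      simp only
      rw [poch_neg_nat, e2', e3']
      field_simp [hPcm, hPcN, hPK m, hfac m, hP2s N]
      have hPcN' : (ascPochhammer ℂ N).eval (2 * (1 - s)) ≠ 0 := by rw [mul_one_sub]; exact hPcN
      rw [mul_div_mul_right _ _ hPcN']
    rw [Finset.sum_congr rfl hterm, ← Finset.mul_sum, chu (2 * (k : ℂ) + n) N (2 - 2 * s)]
    rw [claimA n, claimB]
    have e1' : (ascPochhammer ℂ n).eval (2 * s + 2 * (k : ℂ) - 1)
        = (ascPochhammer ℂ n).eval (2 * s) * (ascPochhammer ℂ N).eval (2 * s + n) /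
            (ascPochhammer ℂ N).eval (2 * s) := by
      rw [eq_div_iff (hP2s N)]
      linear_combination e1
    rw [e1']
    have h1 := hP2s N
    have h2 := hP2s n
    field_simp [h1, h2, hQ]
  -- coefficientwise equality of LHS series and the HasSum series
  have hcoef : (fun n : ℕ =>
      (ascPochhammer ℂ n).eval (2 * s + 2 * (k : ℂ) - 1) * (ascPochhammer ℂ n).eval (2 * (k : ℂ))
        / ((ascPochhammer ℂ n).eval (2 * s) * (n.factorial : ℂ)) * z ^ n)
      = (fun n : ℕ => ∑ m ∈ Finset.range (N + 1),
          w m * ((ascPochhammer ℂ n).eval ((2 * k + m : ℕ) : ℂ) / (n.factorial : ℂ) * z ^ n)) := by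
    funext n
    have : ∑ m ∈ Finset.range (N + 1),
        w m * ((ascPochhammer ℂ n).eval ((2 * k + m : ℕ) : ℂ) / (n.factorial : ℂ) * z ^ n)
        = (∑ m ∈ Finset.range (N + 1),
            w m * (ascPochhammer ℂ n).eval ((2 * k + m : ℕ) : ℂ)) / (n.factorial : ℂ) * z ^ n := by
      rw [Finset.sum_div, Finset.sum_mul]
      apply Finset.sum_congr rfl
      intro m _
      ring
    rw [this, ← core n]
    rw [div_mul_eq_div_div]
  -- assemble
  have hHS' : HasSum (fun n : ℕ =>
      (ascPochhammer ℂ n).eval (2 * s + 2 * (k : ℂ) - 1) * (ascPochhammer ℂ n).eval (2 * (k : ℂ))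
        / ((ascPochhammer ℂ n).eval (2 * s) * (n.factorial : ℂ)) * z ^ n)
      (∑ m ∈ Finset.range (N + 1), w m * ((1 - z)⁻¹) ^ (2 * k + m)) := hcoef ▸ hHS
  have hL : hyp2F1 (2 * s + 2 * (k : ℂ) - 1) (2 * (k : ℂ)) (2 * s) z
      = ∑ m ∈ Finset.range (N + 1), w m * ((1 - z)⁻¹) ^ (2 * k + m) := by
    rw [hyp2F1]
    exact hHS'.tsum_eq
  rw [hL, hRpoly]
  -- final value computation
  have hpow : ((1 - x : ℝ) : ℂ) ^ (-(2 * (k : ℤ))) = ((1 - z)⁻¹) ^ (2 * k) := by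
    have hcast : ((1 - x : ℝ) : ℂ) = 1 - z := by rw [hzdef]; push_cast; ring
    rw [hcast, zpow_neg]
    have : (2 * (k : ℤ)) = ((2 * k : ℕ) : ℤ) := by push_cast; ring
    rw [this, zpow_natCast, inv_pow]
  rw [show (-(2 * (k : ℤ))) = -(2 * k : ℤ) from rfl] at hpow
  rw [hpow]
  have hprod : (∏ i ∈ Finset.range N, (2 * s + (i : ℂ)))⁻¹
      = ((ascPochhammer ℂ N).eval (2 * s))⁻¹ := by
    rw [poch_eval_prod]
  rw [hprod, Finset.mul_sum]
  apply Finset.sum_congr rfl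
  intro m _
  rw [hwdef]
  simp only
  rw [pow_add]
  ring
end

section
/- Let F : ℂ → ℂ be any function, let l ≥ 0 be an integer, and let s ∈ ℂ be such that 2s + m ≠ 0 for every integer m with 0 ≤ m ≤ 2l−2. Define functions G_p recursively by G_0 = F and G_{p+1}(w) = ( G_p(w) − G_p(w+1) ) / (2w + p). Then G_l(s) = ∑_{j=0}^{l} [ (−1)^j C(l, j) / ∏_{i=0, i≠j}^{l} (2s + j − 1 + i) ] · F(s+j). -/
open Complex Finset

private lemma factor_ne (l : ℕ) (s : ℂ) (hs : ∀ m : ℕ, m ≤ 2*l → 2*s + (m:ℂ) ≠ 0)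
    (j i : ℕ) (h1 : 1 ≤ j + i) (h2 : j + i - 1 ≤ 2*l) : 2*s + (j:ℂ) - 1 + (i:ℂ) ≠ 0 := by
  intro heq
  apply hs (j + i - 1) h2
  rw [Nat.cast_sub h1]
  push_cast
  linear_combination heq

private lemma prod_erase_succ (n j : ℕ) (f : ℕ → ℂ) (hj : j ≤ n) :
    ∏ i ∈ (range (n+2)).erase j, f i = f (n+1) * ∏ i ∈ (range (n+1)).erase j, f i := by
  rw [Finset.range_add_one, Finset.erase_insert_of_ne (by omega), Finset.prod_insert (by simp)]

private lemma prod_erase_zero (n j : ℕ) (f : ℕ → ℂ) (hj : 1 ≤ j) (hn : 0 < n) :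
    ∏ i ∈ (range n).erase j, f i = f 0 * ∏ i ∈ ((range n).erase j).erase 0, f i :=
  (Finset.mul_prod_erase _ f (by simp [Finset.mem_erase]; omega)).symm

private lemma prod_shift (n j : ℕ) (s : ℂ) (hj : 1 ≤ j) :
    ∏ i ∈ (range (n+1)).erase (j-1), (2*(s+1) + ((j-1:ℕ):ℂ) - 1 + (i:ℂ))
      = ∏ k ∈ ((range (n+2)).erase j).erase 0, (2*s + (j:ℂ) - 1 + (k:ℂ)) := by
  refine Finset.prod_nbij' (fun i => i + 1) (fun k => k - 1) ?_ ?_ ?_ ?_ ?_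
  · intro a ha; simp only [mem_erase, mem_range] at ha ⊢; omega
  · intro a ha; simp only [mem_erase, mem_range] at ha ⊢; omega
  · intro a ha; omega
  · intro a ha; simp only [mem_erase, mem_range] at ha; omega
  · intro a ha
    rw [Nat.cast_sub hj]
    push_cast
    ring

private lemma key (l : ℕ) (s : ℂ) (hs : ∀ m : ℕ, m ≤ 2*l → 2*s + (m:ℂ) ≠ 0)
    (j : ℕ) (hj : j ∈ range (l+2)) :
    (2*s + (l:ℂ)) * ((-1)^j * ((l+1).choose j : ℂ) /
        ∏ i ∈ (range (l+2)).erase j, (2*s + (j:ℂ) - 1 + (i:ℂ)))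
    = (-1)^j * (l.choose j : ℂ) / (∏ i ∈ (range (l+1)).erase j, (2*s + (j:ℂ) - 1 + (i:ℂ)))
      - (if j = 0 then 0
         else (-1:ℂ)^(j-1) * (l.choose (j-1) : ℂ) /
           ∏ i ∈ (range (l+1)).erase (j-1), (2*(s+1) + ((j-1:ℕ):ℂ) - 1 + (i:ℂ))) := by
  rw [mem_range] at hj
  have hfac : ∀ i ∈ (range (l+2)).erase j, 2*s + (j:ℂ) - 1 + (i:ℂ) ≠ 0 := by
    intro i hi
    simp only [mem_erase, mem_range] at hi
    exact factor_ne l s hs j i (by omega) (by omega)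
  have hP2 : (∏ i ∈ (range (l+2)).erase j, (2*s + (j:ℂ) - 1 + (i:ℂ))) ≠ 0 :=
    Finset.prod_ne_zero_iff.mpr hfac
  have hP1 : (∏ i ∈ (range (l+1)).erase j, (2*s + (j:ℂ) - 1 + (i:ℂ))) ≠ 0 := by
    refine Finset.prod_ne_zero_iff.mpr fun i hi => hfac i ?_
    simp only [mem_erase, mem_range] at hi ⊢; omega
  have h2sl : 2*s + (l:ℂ) ≠ 0 := by
    have := hs l (by omega); simpa using this
  rcases eq_or_ne j 0 with rfl | hj0
  · -- j = 0
    rw [if_pos rfl, sub_zero]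
    have hsplit : ∏ i ∈ (range (l+2)).erase 0, (2*s + ((0:ℕ):ℂ) - 1 + (i:ℂ))
        = (2*s + (l:ℂ)) * ∏ i ∈ (range (l+1)).erase 0, (2*s + ((0:ℕ):ℂ) - 1 + (i:ℂ)) := by
      rw [prod_erase_succ l 0 _ (by omega)]
      push_cast
      ring
    simp only [Nat.choose_zero_right, Nat.cast_one]
    rw [hsplit, ← mul_div_assoc, div_eq_div_iff (mul_ne_zero h2sl hP1) hP1]
    ring
  · rw [if_neg hj0]
    have hj1 : 1 ≤ j := by omega
    -- factor out i = 0 from the big product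
    have hzero : ∏ i ∈ (range (l+2)).erase j, (2*s + (j:ℂ) - 1 + (i:ℂ))
        = (2*s + (j:ℂ) - 1) * ∏ i ∈ ((range (l+2)).erase j).erase 0, (2*s + (j:ℂ) - 1 + (i:ℂ)) := by
      rw [prod_erase_zero (l+2) j _ hj1 (by omega)]
      norm_num
    have hQ : (∏ i ∈ ((range (l+2)).erase j).erase 0, (2*s + (j:ℂ) - 1 + (i:ℂ))) ≠ 0 := by
      refine Finset.prod_ne_zero_iff.mpr fun i hi => hfac i ?_
      exact Finset.mem_of_mem_erase hi
    have hshift := prod_shift l j s hj1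
    rw [hshift]
    have hj91 : 2*s + (j:ℂ) - 1 ≠ 0 := by simpa using factor_ne l s hs j 0 (by omega) (by omega)
    rcases eq_or_ne j (l+1) with rfl | hjl
    · -- j = l + 1
      rw [hzero]
      have hc1 : ((l+1).choose (l+1) : ℂ) = 1 := by simp
      have hc2 : (l.choose (l+1) : ℂ) = 0 := by simp [Nat.choose_eq_zero_of_lt]
      have hc3 : (l.choose (l+1-1) : ℂ) = 1 := by simp
      rw [hc1, hc2, hc3]
      have hval : 2*s + ((l+1:ℕ):ℂ) - 1 = 2*s + (l:ℂ) := by push_cast; ring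
      rw [hval]
      have hpow : ((-1:ℂ))^(l+1) = -(-1:ℂ)^(l+1-1) := by
        simp [pow_succ]
      rw [hpow]
      have hQ2 : (∏ i ∈ ((range (l+2)).erase (l+1)).erase 0, (2*s + (l:ℂ) + (i:ℂ))) ≠ 0 := by
        refine Finset.prod_ne_zero_iff.mpr fun i hi => ?_
        simp only [mem_erase, mem_range] at hi
        have := hs (l + i) (by omega)
        intro h; apply this; push_cast; linear_combination h
      simp only [Nat.add_sub_cancel, mul_one, mul_zero, zero_mul, zero_div, zero_sub]
      rw [← mul_div_assoc, ← neg_div, div_eq_div_iff (mul_ne_zero h2sl hQ2) hQ2]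
      ring
    · -- 1 ≤ j ≤ l
      have hjle : j ≤ l := by omega
      have hsplit := prod_erase_succ l j (fun i => 2*s + (j:ℂ) - 1 + (i:ℂ)) hjle
      have hjl' : 2*s + (j:ℂ) + (l:ℂ) ≠ 0 := by
        have := factor_ne l s hs j (l+1) (by omega) (by omega)
        push_cast at this ⊢
        intro h; exact this (by linear_combination h)
      -- relation between P1 and Q: (2s+j-1) * Q = (2s+j+l) * P1  (both equal P2)
      have hrel : (2*s + (j:ℂ) - 1) * ∏ i ∈ ((range (l+2)).erase j).erase 0, (2*s + (j:ℂ) - 1 + (i:ℂ))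
          = (2*s + (j:ℂ) + (l:ℂ)) * ∏ i ∈ (range (l+1)).erase j, (2*s + (j:ℂ) - 1 + (i:ℂ)) := by
        rw [← hzero, hsplit]
        push_cast; ring
      have hc : (((l+1).choose j : ℕ) : ℂ) = (l.choose (j-1) : ℂ) + (l.choose j : ℂ) := by
        have : (l+1).choose j = l.choose (j-1) + l.choose j := by
          obtain ⟨k, rfl⟩ : ∃ k, j = k + 1 := ⟨j - 1, by omega⟩
          simp [Nat.choose_succ_succ]
        rw [this]; push_cast; ring
      have hab : (l.choose j : ℂ) * (j:ℂ) = (l.choose (j-1) : ℂ) * ((l:ℂ) - (j:ℂ) + 1) := by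
        obtain ⟨k, rfl⟩ : ∃ k, j = k + 1 := ⟨j - 1, by omega⟩
        have := Nat.choose_succ_right_eq l k
        have hcast : ((l.choose (k+1) * (k+1) : ℕ) : ℂ) = ((l.choose k * (l - k) : ℕ) : ℂ) := by
          rw [this]
        rw [Nat.cast_mul, Nat.cast_mul, Nat.cast_sub (by omega)] at hcast
        simp only [Nat.add_sub_cancel]
        push_cast
        push_cast at hcast
        linear_combination hcast
      have hpow : ((-1:ℂ))^(j-1) = -(-1:ℂ)^j := by
        obtain ⟨k, rfl⟩ : ∃ k, j = k + 1 := ⟨j - 1, by omega⟩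
        simp [pow_succ]
      rw [hzero, hpow, hc]
      field_simp
      linear_combination
        (-(∏ i ∈ (Finset.range (l + 1)).erase j, (2*s + (j:ℂ) - 1 + (i:ℂ)))) * hab
          + (-(l.choose j : ℂ)) * hrel

/-- Partial-fraction formula for the iterated difference operator:
if `G₀ = F` and `G_{p+1}(w) = (G_p(w) − G_p(w+1))/(2w+p)`, then
`G_l(s) = ∑_{j=0}^{l} [ (−1)^j C(l,j) / ∏_{0≤i≤l, i≠j} (2s+j−1+i) ] F(s+j)`. -/
theorem iterated_difference_formula (F : ℂ → ℂ) (l : ℕ) (s : ℂ)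
    (hs : ∀ m : ℤ, 0 ≤ m → m ≤ 2 * (l : ℤ) - 2 → 2 * s + (m : ℂ) ≠ 0)
    (G : ℕ → ℂ → ℂ) (hG0 : ∀ w, G 0 w = F w)
    (hGrec : ∀ p w, G (p + 1) w = (G p w - G p (w + 1)) / (2 * w + p)) :
    G l s = ∑ j ∈ Finset.range (l + 1),
      ((-1) ^ j * (l.choose j : ℂ) /
          ∏ i ∈ (Finset.range (l + 1)).erase j, (2 * s + j - 1 + i)) * F (s + j) := by
  induction l generalizing s with
  | zero => simp [hG0]
  | succ l ih =>
    have hsN : ∀ m : ℕ, m ≤ 2*l → 2*s + (m:ℂ) ≠ 0 := by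
      intro m hm
      have := hs m (by positivity) (by push_cast; omega)
      simpa using this
    have h2sl : 2*s + (l:ℂ) ≠ 0 := hsN l (by omega)
    have ihs := ih s (by intro m h1 h2; exact hs m h1 (by omega))
    have ihs1 : G l (s+1) = ∑ j ∈ Finset.range (l + 1),
        ((-1) ^ j * (l.choose j : ℂ) /
            ∏ i ∈ (Finset.range (l + 1)).erase j, (2 * (s+1) + j - 1 + i)) * F ((s+1) + j) := by
      refine ih (s+1) ?_
      intro m h1 h2
      have h := hs (m+2) (by omega) (by omega)
      intro heq; apply h; push_cast; linear_combination heq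
    rw [hGrec, ihs, ihs1, div_eq_iff h2sl, Finset.sum_mul]
    have step : ∀ j ∈ Finset.range (l+2),
        ((-1)^j * ((l+1).choose j : ℂ) /
            ∏ i ∈ (Finset.range (l+2)).erase j, (2*s + (j:ℂ) - 1 + (i:ℂ))) * F (s+(j:ℂ)) * (2*s + (l:ℂ))
        = ((-1)^j * (l.choose j : ℂ) /
              ∏ i ∈ (Finset.range (l+1)).erase j, (2*s + (j:ℂ) - 1 + (i:ℂ))) * F (s+(j:ℂ))
          - (if j = 0 then 0
             else (-1:ℂ)^(j-1) * (l.choose (j-1) : ℂ) /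
               ∏ i ∈ (Finset.range (l+1)).erase (j-1), (2*(s+1) + ((j-1:ℕ):ℂ) - 1 + (i:ℂ))) * F (s+(j:ℂ)) := by
      intro j hj
      have hk := key l s hsN j hj
      linear_combination F (s + (j:ℂ)) * hk
    rw [Finset.sum_congr rfl step, Finset.sum_sub_distrib]
    congr 1
    · conv_rhs => rw [Finset.sum_range_succ]
      simp [Nat.choose_succ_self]
    · conv_rhs => rw [Finset.sum_range_succ']
      norm_num
      refine Finset.sum_congr rfl fun j hj => ?_
      rw [show s + ((j:ℂ) + 1) = s + 1 + (j:ℂ) by ring]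
end

section
/- Let k ≥ 1 and 0 ≤ l ≤ 2k−2 be integers, let N > 1 be a real number, and let s ∈ ℂ with Re s > 1. For integers l' ≥ 0 and 1 ≤ j ≤ 2k−l', define p_j^{[l']}(s) = (j−1)! · C(2k−1−l', j−1) · C(2k+j−2−l', j−1) · ∏_{i=j+1}^{2k−l'} (2s + l' − i), and S^{[l']}(s) = ∑_{j=1}^{2k−l'} p_j^{[l']}(s) · ∑_{n=1}^∞ ( N^n/(N^n−1) )^{j−l'} · N^{−ns}. Then S^{[l]}(s) − S^{[l]}(s+1) = (2s + l) · S^{[l+1]}(s). -/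
open Complex Finset

/-- `p_j^{[l']}(s) = (j−1)! C(2k−1−l', j−1) C(2k+j−2−l', j−1) ∏_{i=j+1}^{2k−l'} (2s+l'−i)`. -/
noncomputable def pjl (k l' j : ℕ) (s : ℂ) : ℂ :=
  ((j - 1).factorial : ℂ) * ((2 * k - 1 - l').choose (j - 1) : ℂ) *
    ((2 * k + j - 2 - l').choose (j - 1) : ℂ) *
    ∏ i ∈ Finset.Icc (j + 1) (2 * k - l'), (2 * s + l' - i)

/-- `S^{[l']}(s) = ∑_{j=1}^{2k−l'} p_j^{[l']}(s) ∑_{n≥1} (Nⁿ/(Nⁿ−1))^{j−l'} N^{−ns}`. -/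
noncomputable def Sld (k l' : ℕ) (N : ℝ) (s : ℂ) : ℂ :=
  ∑ j ∈ Finset.Icc 1 (2 * k - l'), pjl k l' j s *
    ∑' n : ℕ, (((N ^ (n + 1) / (N ^ (n + 1) - 1)) ^ ((j : ℤ) - (l' : ℤ)) : ℝ) : ℂ) *
      ((N : ℂ)) ^ (-(((n + 1 : ℕ)) : ℂ) * s)


noncomputable def Pp (m j : ℕ) (x : ℂ) : ℂ :=
  ((j - 1).factorial : ℂ) * ((m - 1).choose (j - 1) : ℂ) *
    ((m + j - 2).choose (j - 1) : ℂ) * ∏ i ∈ Finset.Icc (j + 1) m, (x - i)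

lemma prod_shift_s17 (c p q : ℕ) (f : ℕ → ℂ) :
    ∏ i ∈ Icc (c + p) (c + q), f i = ∏ i ∈ Icc p q, f (c + i) := by
  rw [← map_add_left_Icc, Finset.prod_map]
  rfl

lemma prod_Icc_bot {p q : ℕ} (h : p ≤ q) (f : ℕ → ℂ) :
    ∏ i ∈ Icc p q, f i = f p * ∏ i ∈ Icc (p + 1) q, f i := by
  rw [Finset.Icc_add_one_left_eq_Ioc, Finset.mul_prod_Ioc_eq_prod_Icc h]

lemma SK4 (m : ℕ) (x : ℂ) : Pp m m x = Pp m m (x + 2) := by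
  unfold Pp
  rw [Finset.Icc_eq_empty (by omega)]
  simp

lemma SK1 (m : ℕ) (hm : 2 ≤ m) (x : ℂ) : Pp m 1 (x + 2) = x * Pp (m - 1) 1 (x + 1) := by
  obtain ⟨b, rfl⟩ : ∃ b, m = b + 2 := ⟨m - 2, by omega⟩
  unfold Pp
  simp only [show b + 2 - 1 = b + 1 by omega, show (1:ℕ) - 1 = 0 from rfl,
    show b + 2 + 1 - 2 = b + 1 by omega, show b + 2 - 1 + 1 - 2 = b by omega,
    Nat.choose_zero_right, Nat.factorial_zero]
  have h1 : ∏ i ∈ Icc (1 + 1) (b + 2), (x + 2 - (i : ℂ)) = ∏ i ∈ Icc 0 b, (x - i) := by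
    rw [show (1+1 : ℕ) = 2 + 0 from rfl, show b + 2 = 2 + b by omega, prod_shift_s17]
    exact Finset.prod_congr rfl fun i _ => by push_cast; ring
  have h2 : ∏ i ∈ Icc (1 + 1) (b + 1), (x + 1 - (i : ℂ)) = ∏ i ∈ Icc 1 b, (x - i) := by
    rw [show b + 1 = 1 + b by omega, prod_shift_s17]
    exact Finset.prod_congr rfl fun i _ => by push_cast; ring
  rw [h1, h2, prod_Icc_bot (Nat.zero_le b)]
  push_cast
  ring

lemma SK3 (m : ℕ) (hm : 2 ≤ m) (x : ℂ) :
    Pp m (m - 1) x - Pp m (m - 1) (x + 2) + Pp m m (x + 2) = 0 := by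
  obtain ⟨d, rfl⟩ : ∃ d, m = d + 2 := ⟨m - 2, by omega⟩
  have h1 := Nat.add_one_mul_choose_eq (2 * d + 1) d
  simp only [Nat.succ_eq_add_one, show 2 * d + 1 + 1 = 2 * d + 2 from rfl] at h1
  have h3 : (2 * d + 2).choose (d + 1) = 2 * ((2 * d + 1).choose d) := by
    refine Nat.eq_of_mul_eq_mul_right (Nat.succ_pos d) ?_
    rw [Nat.succ_eq_add_one, ← h1]; ring
  unfold Pp
  simp only [show d + 2 - 1 = d + 1 by omega, show d + 1 - 1 = d by omega,
    show d + 2 + (d + 1) - 2 = 2 * d + 1 by omega, show d + 2 + (d + 2) - 2 = 2 * d + 2 by omega,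
    show d + 1 + 1 = d + 2 from rfl, Finset.Icc_self, Finset.prod_singleton,
    Finset.Icc_eq_empty (show ¬ (d + 2 + 1 ≤ d + 2) by omega), Finset.prod_empty,
    Nat.choose_succ_self_right, Nat.choose_self, h3, Nat.factorial_succ]
  push_cast
  ring

lemma SK2 (a b : ℕ) (x : ℂ) :
    Pp (a + b + 3) (a + 1) x - Pp (a + b + 3) (a + 1) (x + 2) + Pp (a + b + 3) (a + 2) (x + 2)
      = x * Pp (a + b + 2) (a + 2) (x + 1) := by
  have hA : ((a : ℂ) + 1) ≠ 0 := by
    have : ((a + 1 : ℕ) : ℂ) ≠ 0 := Nat.cast_ne_zero.mpr (Nat.succ_ne_zero a)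
    push_cast at this; exact this
  have hB : ((a : ℂ) + (b : ℂ) + 2) ≠ 0 := by
    have : ((a + b + 2 : ℕ) : ℂ) ≠ 0 := Nat.cast_ne_zero.mpr (by omega)
    push_cast at this; exact this
  -- choose identities
  have e1 : ((a + b + 2).choose (a + 1) : ℂ) * (a + 1) = ((a + b + 2).choose a : ℂ) * (b + 2) := by
    have := Nat.choose_succ_right_eq (a + b + 2) a
    rw [show a + b + 2 - a = b + 2 by omega] at this
    exact_mod_cast this
  have e2 : ((2 * a + b + 3).choose (a + 1) : ℂ) * (a + 1)
      = (2 * (a : ℂ) + b + 3) * ((2 * a + b + 2).choose a : ℂ) := by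
    have := Nat.add_one_mul_choose_eq (2 * a + b + 2) a
    simp only [Nat.succ_eq_add_one, show 2 * a + b + 2 + 1 = 2 * a + b + 3 from rfl] at this
    exact_mod_cast this.symm
  have e3 : ((a + b + 1).choose (a + 1) : ℂ) * ((a : ℂ) + b + 2)
      = ((a + b + 2).choose (a + 1) : ℂ) * (b + 1) := by
    have := Nat.choose_mul_succ_eq (a + b + 1) (a + 1)
    rw [show a + b + 1 + 1 = a + b + 2 from rfl, show a + b + 2 - (a + 1) = b + 1 by omega] at this
    exact_mod_cast this
  have e4 : ((2 * a + b + 2).choose (a + 1) : ℂ) * (a + 1)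
      = ((2 * a + b + 2).choose a : ℂ) * ((a : ℂ) + b + 2) := by
    have := Nat.choose_succ_right_eq (2 * a + b + 2) a
    rw [show 2 * a + b + 2 - a = a + b + 2 by omega] at this
    exact_mod_cast this
  have d1 : ((a + b + 2).choose (a + 1) : ℂ) = ((a + b + 2).choose a : ℂ) * (b + 2) / (a + 1) :=
    (eq_div_iff hA).mpr e1
  have d2 : ((2 * a + b + 3).choose (a + 1) : ℂ)
      = (2 * (a : ℂ) + b + 3) * ((2 * a + b + 2).choose a : ℂ) / (a + 1) :=
    (eq_div_iff hA).mpr e2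
  have d4 : ((2 * a + b + 2).choose (a + 1) : ℂ)
      = ((2 * a + b + 2).choose a : ℂ) * ((a : ℂ) + b + 2) / (a + 1) :=
    (eq_div_iff hA).mpr e4
  have d3 : ((a + b + 1).choose (a + 1) : ℂ)
      = ((a + b + 2).choose a : ℂ) * (b + 2) * (b + 1) / (((a : ℂ) + 1) * ((a : ℂ) + b + 2)) := by
    rw [eq_div_iff (mul_ne_zero hA hB)]
    linear_combination ((a : ℂ) + 1) * e3 + ((b : ℂ) + 1) * e1
  -- products
  set Q : ℂ := ∏ i ∈ Icc (a + 2) (a + b + 1), (x - (i : ℂ)) with hQ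
  have hP1 : ∏ i ∈ Icc (a + 1 + 1) (a + b + 3), (x - (i : ℂ))
      = Q * (x - ((a : ℂ) + b + 2)) * (x - ((a : ℂ) + b + 3)) := by
    rw [show a + b + 3 = (a + b + 2) + 1 from rfl,
      Finset.prod_Icc_succ_top (by omega : a + 1 + 1 ≤ a + b + 2 + 1),
      show a + b + 2 = (a + b + 1) + 1 from rfl,
      Finset.prod_Icc_succ_top (by omega : a + 1 + 1 ≤ a + b + 1 + 1)]
    rw [show a + 1 + 1 = a + 2 from rfl, ← hQ]
    push_cast; ring
  have hsh2 : ∀ (p q : ℕ), ∏ i ∈ Icc (2 + p) (2 + q), (x + 2 - (i : ℂ))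
      = ∏ i ∈ Icc p q, (x - (i : ℂ)) := by
    intro p q
    rw [prod_shift_s17]
    exact Finset.prod_congr rfl fun i _ => by push_cast; ring
  have hP2 : ∏ i ∈ Icc (a + 1 + 1) (a + b + 3), (x + 2 - (i : ℂ))
      = (x - (a : ℂ)) * (x - ((a : ℂ) + 1)) * Q := by
    rw [show a + 1 + 1 = 2 + a by omega, show a + b + 3 = 2 + (a + b + 1) by omega, hsh2,
      prod_Icc_bot (by omega : a ≤ a + b + 1), prod_Icc_bot (by omega : a + 1 ≤ a + b + 1),
      show a + 1 + 1 = a + 2 from rfl, ← hQ]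
    push_cast; ring
  have hP3 : ∏ i ∈ Icc (a + 2 + 1) (a + b + 3), (x + 2 - (i : ℂ)) = (x - ((a : ℂ) + 1)) * Q := by
    rw [show a + 2 + 1 = 2 + (a + 1) by omega, show a + b + 3 = 2 + (a + b + 1) by omega, hsh2,
      prod_Icc_bot (by omega : a + 1 ≤ a + b + 1), show a + 1 + 1 = a + 2 from rfl, ← hQ]
    push_cast; ring
  have hP4 : ∏ i ∈ Icc (a + 2 + 1) (a + b + 2), (x + 1 - (i : ℂ)) = Q := by
    rw [show a + 2 + 1 = 1 + (a + 2) by omega, show a + b + 2 = 1 + (a + b + 1) by omega,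
      prod_shift_s17, hQ]
    exact Finset.prod_congr rfl fun i _ => by push_cast; ring
  unfold Pp
  simp only [show a + 1 - 1 = a from rfl, show a + 2 - 1 = a + 1 from rfl,
    show a + b + 3 - 1 = a + b + 2 from rfl, show a + b + 2 - 1 = a + b + 1 from rfl,
    show a + b + 3 + (a + 1) - 2 = 2 * a + b + 2 by omega,
    show a + b + 3 + (a + 2) - 2 = 2 * a + b + 3 by omega,
    show a + b + 2 + (a + 2) - 2 = 2 * a + b + 2 by omega,
    Nat.factorial_succ]
  rw [hP1, hP2, hP3, hP4, d1, d2, d3, d4]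
  push_cast
  field_simp
  ring

lemma B1 (k l j : ℕ) (hk : 1 ≤ k) (hl : l ≤ 2 * k - 2) (hj : 1 ≤ j) (s : ℂ) :
    pjl k l j s = Pp (2 * k - l) j (2 * s + l) := by
  unfold pjl Pp
  rw [show 2 * k - 1 - l = 2 * k - l - 1 by omega,
    show 2 * k + j - 2 - l = 2 * k - l + j - 2 by omega]

lemma B2 (k l j : ℕ) (hk : 1 ≤ k) (hl : l ≤ 2 * k - 2) (hj : 1 ≤ j) (s : ℂ) :
    pjl k l j (s + 1) = Pp (2 * k - l) j (2 * s + l + 2) := by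
  rw [B1 k l j hk hl hj]
  unfold Pp
  congr 1
  exact Finset.prod_congr rfl fun i _ => by ring

lemma B3 (k l j : ℕ) (hk : 1 ≤ k) (hl : l ≤ 2 * k - 2) (hj : 1 ≤ j) (s : ℂ) :
    pjl k (l + 1) j s = Pp (2 * k - l - 1) j (2 * s + l + 1) := by
  unfold pjl Pp
  rw [show 2 * k - 1 - (l + 1) = 2 * k - l - 1 - 1 by omega,
    show 2 * k + j - 2 - (l + 1) = 2 * k - l - 1 + j - 2 by omega,
    show 2 * k - (l + 1) = 2 * k - l - 1 by omega]
  congr 1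
  exact Finset.prod_congr rfl fun i _ => by push_cast; ring

noncomputable def Tser (N : ℝ) (s : ℂ) (e : ℤ) : ℂ :=
  ∑' n : ℕ, (((N ^ (n + 1) / (N ^ (n + 1) - 1)) ^ e : ℝ) : ℂ) *
      ((N : ℂ)) ^ (-(((n + 1 : ℕ)) : ℂ) * s)

lemma zpow_le_C {t c : ℝ} (h1 : 1 ≤ t) (htc : t ≤ c) (e : ℤ) : t ^ e ≤ c ^ e.natAbs := by
  have hc1 : (1 : ℝ) ≤ c := le_trans h1 htc
  obtain ⟨n, rfl | rfl⟩ := e.eq_nat_or_neg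
  · simpa using pow_le_pow_left₀ (by linarith) htc n
  · rw [zpow_neg, zpow_natCast, Int.natAbs_neg, Int.natAbs_natCast]
    calc (t ^ n)⁻¹ ≤ 1 := inv_le_one_of_one_le₀ (one_le_pow₀ h1)
    _ ≤ c ^ n := one_le_pow₀ hc1

lemma summable_T (N : ℝ) (hN : 1 < N) (s : ℂ) (hs : 1 < s.re) (e : ℤ) :
    Summable (fun n : ℕ => (((N ^ (n + 1) / (N ^ (n + 1) - 1)) ^ e : ℝ) : ℂ) *
      ((N : ℂ)) ^ (-(((n + 1 : ℕ)) : ℂ) * s)) := by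
  have hN0 : (0 : ℝ) < N := by linarith
  set c : ℝ := N / (N - 1) with hc
  have hc1 : (1 : ℝ) ≤ c := by rw [hc, le_div_iff₀ (by linarith)]; linarith
  set r : ℝ := N ^ (-s.re) with hr
  have hr0 : 0 ≤ r := Real.rpow_nonneg hN0.le _
  have hr1 : r < 1 := Real.rpow_lt_one_of_one_lt_of_neg hN (by linarith)
  set C : ℝ := c ^ e.natAbs with hC
  apply Summable.of_norm
  refine Summable.of_nonneg_of_le (f := fun n : ℕ => (C * r) * r ^ n)
    (fun n => norm_nonneg _) ?_ ((summable_geometric_of_lt_one hr0 hr1).mul_left _)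
  intro n
  have hPn : (1 : ℝ) < N ^ (n + 1) := one_lt_pow₀ hN (Nat.succ_ne_zero n)
  have hNP : N ≤ N ^ (n + 1) := le_self_pow₀ hN.le (Nat.succ_ne_zero n)
  set t : ℝ := N ^ (n + 1) / (N ^ (n + 1) - 1) with ht
  have ht0 : 0 < t := div_pos (by linarith) (by linarith)
  have h1t : (1 : ℝ) ≤ t := by
    rw [ht, le_div_iff₀ (by linarith)]; linarith
  have htc : t ≤ c := by
    rw [ht, hc, div_le_div_iff₀ (by linarith) (by linarith)]
    nlinarith
  have hre : (-(((n + 1 : ℕ)) : ℂ) * s).re = (-s.re) * ((n : ℝ) + 1) := by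
    simp [Complex.mul_re]
    ring
  have hnorm : ‖(((t ^ e : ℝ)) : ℂ) * ((N : ℂ)) ^ (-(((n + 1 : ℕ)) : ℂ) * s)‖
      = t ^ e * r ^ (n + 1) := by
    rw [norm_mul, Complex.norm_real,
      Complex.norm_cpow_eq_rpow_re_of_pos hN0, hre, Real.rpow_mul hN0.le,
      show ((n : ℝ) + 1) = ((n + 1 : ℕ) : ℝ) by push_cast; ring, Real.rpow_natCast,
      Real.norm_eq_abs, _root_.abs_of_nonneg (zpow_nonneg ht0.le e)]
  rw [hnorm]
  calc t ^ e * r ^ (n + 1) ≤ C * r ^ (n + 1) :=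
        mul_le_mul_of_nonneg_right (zpow_le_C h1t htc e) (pow_nonneg hr0 _)
    _ = (C * r) * r ^ n := by rw [pow_succ]; ring

lemma T_rec (N : ℝ) (hN : 1 < N) (s : ℂ) (hs : 1 < s.re) (e : ℤ) :
    Tser N (s + 1) e = Tser N s e - Tser N s (e - 1) := by
  have hN0 : (0 : ℝ) < N := by linarith
  have hNc0 : (N : ℂ) ≠ 0 := by
    exact_mod_cast ne_of_gt hN0
  unfold Tser
  rw [← Summable.tsum_sub (summable_T N hN s hs e) (summable_T N hN s hs (e - 1))]
  apply tsum_congr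
  intro n
  have hPn : (1 : ℝ) < N ^ (n + 1) := one_lt_pow₀ hN (Nat.succ_ne_zero n)
  set t : ℝ := N ^ (n + 1) / (N ^ (n + 1) - 1) with ht
  have ht0 : t ≠ 0 := ne_of_gt (div_pos (by linarith) (by linarith))
  have hinv : t⁻¹ = 1 - (N ^ (n + 1))⁻¹ := by
    rw [ht, inv_div]
    field_simp
  have hreal : t ^ e - t ^ (e - 1) = t ^ e * (N ^ (n + 1))⁻¹ := by
    rw [zpow_sub_one₀ ht0, hinv]
    ring
  have hsplit : ((N : ℂ)) ^ (-(((n + 1 : ℕ)) : ℂ) * (s + 1))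
      = ((N : ℂ)) ^ (-(((n + 1 : ℕ)) : ℂ) * s) * (((N ^ (n + 1) : ℝ))⁻¹ : ℂ) := by
    rw [mul_add, Complex.cpow_add _ _ hNc0, mul_one]
    congr 1
    rw [Complex.cpow_neg, Complex.cpow_natCast]
    push_cast
    ring
  rw [hsplit]
  have hc := congrArg (Complex.ofReal) hreal
  push_cast at hc ⊢
  linear_combination -((N : ℂ)) ^ (-(((n : ℂ)) + 1) * s) * hc

lemma sum_Icc_bot {p q : ℕ} (h : p ≤ q) (f : ℕ → ℂ) :
    ∑ i ∈ Icc p q, f i = f p + ∑ i ∈ Icc (p + 1) q, f i := by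
  rw [Finset.Icc_add_one_left_eq_Ioc, Finset.add_sum_Ioc_eq_sum_Icc h]

/-- The difference recursion `S^{[l]}(s) − S^{[l]}(s+1) = (2s+l) S^{[l+1]}(s)`. -/
theorem Sld_difference (k : ℕ) (hk : 1 ≤ k) (l : ℕ) (hl : l ≤ 2 * k - 2)
    (N : ℝ) (hN : 1 < N) (s : ℂ) (hs : 1 < s.re) :
    Sld k l N s - Sld k l N (s + 1) = (2 * s + l) * Sld k (l + 1) N s := by
  have hs1 : 1 < (s + 1).re := by rw [Complex.add_re, Complex.one_re]; linarith
  set M : ℕ := 2 * k - l with hMdef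
  have hM : 2 ≤ M := by omega
  set x : ℂ := 2 * s + (l : ℂ) with hx
  set T : ℤ → ℂ := fun e => Tser N s e with hT
  -- coefficient identities
  have hK1 : pjl k l 1 (s + 1) = x * pjl k (l + 1) 1 s := by
    rw [B2 k l 1 hk hl le_rfl, B3 k l 1 hk hl le_rfl, ← hMdef]
    exact SK1 M hM x
  have hK4 : pjl k l M s = pjl k l M (s + 1) := by
    rw [B1 k l M hk hl (by omega), B2 k l M hk hl (by omega), ← hMdef]
    exact SK4 M x
  have hK3 : pjl k l (M - 1) s - pjl k l (M - 1) (s + 1) + pjl k l M (s + 1) = 0 := by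
    rw [B1 k l (M - 1) hk hl (by omega), B2 k l (M - 1) hk hl (by omega),
      B2 k l M hk hl (by omega), ← hMdef]
    exact SK3 M hM x
  have hK2 : ∀ j, 2 ≤ j → j ≤ M - 1 →
      pjl k l (j - 1) s - pjl k l (j - 1) (s + 1) + pjl k l j (s + 1)
        = x * pjl k (l + 1) j s := by
    intro j hj2 hjM
    rw [B1 k l (j - 1) hk hl (by omega), B2 k l (j - 1) hk hl (by omega),
      B2 k l j hk hl (by omega), B3 k l j hk hl (by omega), ← hMdef]
    obtain ⟨a, rfl⟩ : ∃ a, j = a + 2 := ⟨j - 2, by omega⟩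
    obtain ⟨b, hb⟩ : ∃ b, M = a + b + 3 := ⟨M - a - 3, by omega⟩
    rw [hb, show a + 2 - 1 = a + 1 from rfl, show a + b + 3 - 1 = a + b + 2 from rfl]
    exact SK2 a b x
  -- rewrite the three Sld as finite sums of T-atoms
  have hSld1 : Sld k l N s = ∑ j ∈ Icc 1 M, pjl k l j s * T ((j : ℤ) - l) := rfl
  have hSld2 : Sld k l N (s + 1)
      = ∑ j ∈ Icc 1 M, pjl k l j (s + 1) * (T ((j : ℤ) - l) - T ((j : ℤ) - l - 1)) := by
    refine Finset.sum_congr rfl fun j _ => ?_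
    have : Tser N (s + 1) ((j : ℤ) - l) = T ((j : ℤ) - l) - T ((j : ℤ) - l - 1) := by
      rw [hT, T_rec N hN s hs]
    rw [← this]
    rfl
  have hSld3 : Sld k (l + 1) N s = ∑ j ∈ Icc 1 (M - 1), pjl k (l + 1) j s * T ((j : ℤ) - l - 1) := by
    show (∑ j ∈ Icc 1 (2 * k - (l + 1)), pjl k (l + 1) j s * Tser N s ((j : ℤ) - ((l + 1 : ℕ) : ℤ))) = _
    rw [show 2 * k - (l + 1) = M - 1 by omega]
    refine Finset.sum_congr rfl fun j _ => ?_
    rw [show (j : ℤ) - ((l + 1 : ℕ) : ℤ) = (j : ℤ) - l - 1 by push_cast; ring]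
  rw [hSld1, hSld2, hSld3, ← Finset.sum_sub_distrib]
  -- split LHS
  have step1 : ∑ j ∈ Icc 1 M,
      (pjl k l j s * T ((j : ℤ) - l) - pjl k l j (s + 1) * (T ((j : ℤ) - l) - T ((j : ℤ) - l - 1)))
      = (∑ j ∈ Icc 1 M, (pjl k l j s - pjl k l j (s + 1)) * T ((j : ℤ) - l))
        + ∑ j ∈ Icc 1 M, pjl k l j (s + 1) * T ((j : ℤ) - l - 1) := by
    rw [← Finset.sum_add_distrib]
    exact Finset.sum_congr rfl fun j _ => by ring
  rw [step1]
  -- first sum: peel top two, reindex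
  have peel1 : ∑ j ∈ Icc 1 M, (pjl k l j s - pjl k l j (s + 1)) * T ((j : ℤ) - l)
      = (∑ j ∈ Icc 1 (M - 2), (pjl k l j s - pjl k l j (s + 1)) * T ((j : ℤ) - l))
        + (pjl k l (M - 1) s - pjl k l (M - 1) (s + 1)) * T (((M - 1 : ℕ) : ℤ) - l) := by
    rw [show M = (M - 1) + 1 by omega, Finset.sum_Icc_succ_top (by omega)]
    rw [show M - 1 + 1 - 1 = M - 1 by omega]
    rw [show (M - 1 : ℕ) = (M - 2) + 1 by omega, Finset.sum_Icc_succ_top (by omega)]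
    rw [show M - 2 + 1 = M - 1 by omega]
    have hz : pjl k l ((M - 1) + 1) s - pjl k l ((M - 1) + 1) (s + 1) = 0 := by
      rw [show (M - 1) + 1 = M by omega]
      rw [hK4]; ring
    rw [hz, zero_mul, add_zero, show M - 1 + 1 - 2 = M - 2 by omega]
  have reindex : ∑ j ∈ Icc 1 (M - 2), (pjl k l j s - pjl k l j (s + 1)) * T ((j : ℤ) - l)
      = ∑ j ∈ Icc 2 (M - 1), (pjl k l (j - 1) s - pjl k l (j - 1) (s + 1)) * T ((j : ℤ) - l - 1) := by
    rw [show (2 : ℕ) = 1 + 1 from rfl, show M - 1 = 1 + (M - 2) by omega, ← map_add_left_Icc,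
      Finset.sum_map]
    refine Finset.sum_congr rfl fun j _ => ?_
    simp only [addLeftEmbedding_apply]
    rw [show 1 + j - 1 = j by omega, show ((1 + j : ℕ) : ℤ) - l - 1 = (j : ℤ) - l by push_cast; ring]
  -- second sum: peel top and bottom
  have peel2 : ∑ j ∈ Icc 1 M, pjl k l j (s + 1) * T ((j : ℤ) - l - 1)
      = pjl k l 1 (s + 1) * T (1 - l - 1)
        + (∑ j ∈ Icc 2 (M - 1), pjl k l j (s + 1) * T ((j : ℤ) - l - 1))
        + pjl k l M (s + 1) * T ((M : ℤ) - l - 1) := by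
    rw [show M = (M - 1) + 1 by omega, Finset.sum_Icc_succ_top (by omega),
      sum_Icc_bot (by omega : 1 ≤ M - 1)]
    rw [show (M - 1 : ℕ) + 1 = M by omega]
    push_cast
    ring
  -- RHS: distribute and peel bottom
  have hRHS : x * (∑ j ∈ Icc 1 (M - 1), pjl k (l + 1) j s * T ((j : ℤ) - l - 1))
      = x * (pjl k (l + 1) 1 s * T (1 - l - 1))
        + ∑ j ∈ Icc 2 (M - 1), x * (pjl k (l + 1) j s * T ((j : ℤ) - l - 1)) := by
    rw [sum_Icc_bot (by omega : 1 ≤ M - 1), mul_add, Finset.mul_sum]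
    norm_num
  rw [peel1, reindex, peel2, hRHS]
  have hMcast : ((M - 1 : ℕ) : ℤ) - l = (M : ℤ) - l - 1 := by
    have : (1 : ℕ) ≤ M := by omega
    push_cast [this]
    ring
  rw [hMcast]
  have merge : ∑ j ∈ Icc 2 (M - 1), (pjl k l (j - 1) s - pjl k l (j - 1) (s + 1)) * T ((j : ℤ) - l - 1)
      + ∑ j ∈ Icc 2 (M - 1), pjl k l j (s + 1) * T ((j : ℤ) - l - 1)
      = ∑ j ∈ Icc 2 (M - 1), x * (pjl k (l + 1) j s * T ((j : ℤ) - l - 1)) := by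
    rw [← Finset.sum_add_distrib]
    refine Finset.sum_congr rfl fun j hj => ?_
    rw [Finset.mem_Icc] at hj
    linear_combination T ((j : ℤ) - l - 1) * hK2 j hj.1 hj.2
  calc (∑ j ∈ Icc 2 (M - 1), (pjl k l (j - 1) s - pjl k l (j - 1) (s + 1)) * T ((j : ℤ) - l - 1))
        + (pjl k l (M - 1) s - pjl k l (M - 1) (s + 1)) * T ((M : ℤ) - l - 1)
        + (pjl k l 1 (s + 1) * T (1 - l - 1)
          + (∑ j ∈ Icc 2 (M - 1), pjl k l j (s + 1) * T ((j : ℤ) - l - 1))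
          + pjl k l M (s + 1) * T ((M : ℤ) - l - 1))
      = (∑ j ∈ Icc 2 (M - 1), (pjl k l (j - 1) s - pjl k l (j - 1) (s + 1)) * T ((j : ℤ) - l - 1)
          + ∑ j ∈ Icc 2 (M - 1), pjl k l j (s + 1) * T ((j : ℤ) - l - 1))
        + (pjl k l (M - 1) s - pjl k l (M - 1) (s + 1) + pjl k l M (s + 1)) * T ((M : ℤ) - l - 1)
        + pjl k l 1 (s + 1) * T (1 - l - 1) := by ring
    _ = x * (pjl k (l + 1) 1 s * T (1 - l - 1))
        + ∑ j ∈ Icc 2 (M - 1), x * (pjl k (l + 1) j s * T ((j : ℤ) - l - 1)) := by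
        rw [merge, hK3, hK1]
        ring
end
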